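/- Let \mu be a compactly supported Borel probability measure with finite quasi-upper Assouad dimension. Then the functions \theta \mapsto \underline{dim}_A^{=\theta}\mu and \theta \mapsto \overline{dim}_A^{=\theta}\mu are continuous on (0,1), and moreover lim_{\theta\to 1} \underline{dim}_A^{=\theta}\mu = dim_{qL}\mu and lim_{\theta\to 1} \overline{dim}_A^{=\theta}\mu = dim_{qA}\mu. -/

import Mathlib

open MeasureTheory Metric Set Filter
open scoped ENNReal

def msupp {X : Type*} [MetricSpace X] [MeasurableSpace X] (μ : Measure X) : Set X :=
  {x | ∀ r > 0, 0 < μ (ball x r)}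

def lowerHSet {X : Type*} [MetricSpace X] [MeasurableSpace X] (μ : Measure X) (δ : ℝ) : Set ℝ :=
  {s | 0 ≤ s ∧ ∃ c₁ > (0:ℝ), ∃ c₂ > (0:ℝ), ∀ x ∈ msupp μ, ∀ r R : ℝ,
    0 < r → 0 < R → r ≤ R ^ (1 + δ) → R ^ (1 + δ) ≤ c₁ →
    c₂ * (R / r) ^ s * (μ (ball x r)).toReal ≤ (μ (ball x R)).toReal}

def upperHSet {X : Type*} [MetricSpace X] [MeasurableSpace X] (μ : Measure X) (δ : ℝ) : Set ℝ :=
  {s | 0 ≤ s ∧ ∃ c₁ > (0:ℝ), ∃ c₂ > (0:ℝ), ∀ x ∈ msupp μ, ∀ r R : ℝ,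
    0 < r → 0 < R → r ≤ R ^ (1 + δ) → R ^ (1 + δ) ≤ c₁ →
    (μ (ball x R)).toReal ≤ c₂ * (R / r) ^ s * (μ (ball x r)).toReal}

noncomputable def dimqL {X : Type*} [MetricSpace X] [MeasurableSpace X] (μ : Measure X) : ℝ :=
  ⨅ δ : {δ : ℝ // 0 < δ}, sSup (lowerHSet μ δ.1)

noncomputable def dimqA {X : Type*} [MetricSpace X] [MeasurableSpace X] (μ : Measure X) : ℝ :=
  ⨆ δ : {δ : ℝ // 0 < δ}, sInf (upperHSet μ δ.1)

noncomputable def upperEq {X : Type*} [MetricSpace X] [MeasurableSpace X]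
    (μ : Measure X) (θ : ℝ) : ℝ :=
  sInf {s | 0 ≤ s ∧ ∃ c > (0:ℝ), ∃ R₀ > (0:ℝ), ∀ x ∈ msupp μ, ∀ R : ℝ, 0 < R → R ≤ R₀ →
    (μ (ball x R)).toReal ≤ c * (R ^ (1 - 1 / θ)) ^ s * (μ (ball x (R ^ (1 / θ)))).toReal}

noncomputable def lowerEq {X : Type*} [MetricSpace X] [MeasurableSpace X]
    (μ : Measure X) (θ : ℝ) : ℝ :=
  sSup {s | 0 ≤ s ∧ ∃ c > (0:ℝ), ∃ R₀ > (0:ℝ), ∀ x ∈ msupp μ, ∀ R : ℝ, 0 < R → R ≤ R₀ →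
    c * (R ^ (1 - 1 / θ)) ^ s * (μ (ball x (R ^ (1 / θ)))).toReal ≤ (μ (ball x R)).toReal}

/-! ### Auxiliary definitions and lemmas -/

section Aux

variable {X : Type*} [MetricSpace X] [MeasurableSpace X] (μ : Measure X)

noncomputable def mm (x : X) (r : ℝ) : ℝ := (μ (ball x r)).toReal

def ESet (θ : ℝ) : Set ℝ :=
  {s | 0 ≤ s ∧ ∃ c > (0:ℝ), ∃ R₀ > (0:ℝ), ∀ x ∈ msupp μ, ∀ R : ℝ, 0 < R → R ≤ R₀ →
    mm μ x R ≤ c * (R ^ (1 - 1 / θ)) ^ s * mm μ x (R ^ (1 / θ))}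

def LSet (θ : ℝ) : Set ℝ :=
  {s | 0 ≤ s ∧ ∃ c > (0:ℝ), ∃ R₀ > (0:ℝ), ∀ x ∈ msupp μ, ∀ R : ℝ, 0 < R → R ≤ R₀ →
    c * (R ^ (1 - 1 / θ)) ^ s * mm μ x (R ^ (1 / θ)) ≤ mm μ x R}

lemma upperEq_def (θ : ℝ) : upperEq μ θ = sInf (ESet μ θ) := rfl

lemma lowerEq_def (θ : ℝ) : lowerEq μ θ = sSup (LSet μ θ) := rfl

variable [IsProbabilityMeasure μ]

lemma mm_pos {x : X} (hx : x ∈ msupp μ) {r : ℝ} (hr : 0 < r) : 0 < mm μ x r :=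
  ENNReal.toReal_pos (hx r hr).ne' (measure_ne_top μ _)

lemma mm_mono (x : X) {r r' : ℝ} (h : r ≤ r') : mm μ x r ≤ mm μ x r' :=
  ENNReal.toReal_mono (measure_ne_top μ _) (measure_mono (ball_subset_ball h))

lemma mm_nonneg (x : X) (r : ℝ) : 0 ≤ mm μ x r := ENNReal.toReal_nonneg

end Aux

/-! ### Generic real lemmas -/

/-- If `c * Q ^ s ≤ c' * Q ^ s'` for arbitrarily large `Q ≥ 1`, then `s ≤ s'`. -/
lemma exp_le_of_forall_large {s s' c c' : ℝ} (hc : 0 < c) (hc' : 0 < c')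
    (h : ∀ Q₀ : ℝ, ∃ Q : ℝ, Q₀ ≤ Q ∧ 1 ≤ Q ∧ c * Q ^ s ≤ c' * Q ^ s') : s ≤ s' := by
  by_contra hlt
  push_neg at hlt
  set a := s - s' with ha
  have ha0 : 0 < a := by rw [ha]; linarith
  obtain ⟨Q, hQ₁, hQ1, hQ⟩ := h (((c' / c) ^ (1 / a) : ℝ) + 1)
  have hQpos : (0:ℝ) < Q := lt_of_lt_of_le one_pos hQ1
  have hcc' : (0:ℝ) < c' / c := div_pos hc' hc
  have hgt : c' / c < Q ^ a := by
    have h1 : (c' / c) ^ (1 / a) < Q := lt_of_lt_of_le (lt_add_one _) hQ₁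
    have h2 : ((c' / c) ^ (1 / a)) ^ a < Q ^ a :=
      Real.rpow_lt_rpow (Real.rpow_nonneg hcc'.le _) h1 ha0
    rwa [← Real.rpow_mul hcc'.le, one_div, inv_mul_cancel₀ ha0.ne', Real.rpow_one] at h2
  have hle : Q ^ a ≤ c' / c := by
    have hsplit : Q ^ s = Q ^ a * Q ^ s' := by
      rw [← Real.rpow_add hQpos, ha]; ring_nf
    rw [hsplit] at hQ
    have hQs' : 0 < Q ^ s' := Real.rpow_pos_of_pos hQpos _
    rw [div_eq_mul_inv]
    calc Q ^ a = c * Q ^ a * Q ^ s' * (Q ^ s')⁻¹ * c⁻¹ := by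
          field_simp
      _ ≤ c' * Q ^ s' * (Q ^ s')⁻¹ * c⁻¹ := by
          apply mul_le_mul_of_nonneg_right _ (inv_nonneg.2 hc.le)
          apply mul_le_mul_of_nonneg_right _ (inv_nonneg.2 hQs'.le)
          calc c * Q ^ a * Q ^ s' = c * (Q ^ a * Q ^ s') := by ring
            _ ≤ c' * Q ^ s' := hQ
      _ = c' * c⁻¹ := by field_simp
  exact absurd (lt_of_le_of_lt hle hgt) (lt_irrefl _)

/-- A negative power of a small positive number is large: producing arbitrarily large
`R ^ e` (with `e < 0`) for `R` arbitrarily small. -/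
lemma rpow_neg_exp_large {e : ℝ} (he : e < 0) (Q₀ Rmax : ℝ) (hRmax : 0 < Rmax) :
    ∃ R : ℝ, 0 < R ∧ R ≤ Rmax ∧ R ≤ 1 ∧ Q₀ ≤ R ^ e ∧ 1 ≤ R ^ e := by
  set Q₁ : ℝ := max Q₀ 1 with hQ₁
  have hQ₁pos : (0:ℝ) < Q₁ := lt_of_lt_of_le one_pos (le_max_right _ _)
  set K : ℝ := Q₁ ^ (1 / e) with hK
  have hKpos : 0 < K := Real.rpow_pos_of_pos hQ₁pos _
  refine ⟨min Rmax (min K 1), ?_, min_le_left _ _, le_trans (min_le_right _ _) (min_le_right _ _), ?_, ?_⟩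
  · exact lt_min hRmax (lt_min hKpos one_pos)
  · have hRK : min Rmax (min K 1) ≤ K := le_trans (min_le_right _ _) (min_le_left _ _)
    have hRpos : 0 < min Rmax (min K 1) := lt_min hRmax (lt_min hKpos one_pos)
    have h1 : K ^ e ≤ (min Rmax (min K 1)) ^ e :=
      Real.rpow_le_rpow_of_nonpos hRpos hRK he.le
    have h2 : K ^ e = Q₁ := by
      rw [hK, ← Real.rpow_mul hQ₁pos.le, one_div, inv_mul_cancel₀ he.ne, Real.rpow_one]
    calc Q₀ ≤ Q₁ := le_max_left _ _
      _ = K ^ e := h2.symm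
      _ ≤ _ := h1
  · have hRK : min Rmax (min K 1) ≤ K := le_trans (min_le_right _ _) (min_le_left _ _)
    have hRpos : 0 < min Rmax (min K 1) := lt_min hRmax (lt_min hKpos one_pos)
    have h1 : K ^ e ≤ (min Rmax (min K 1)) ^ e :=
      Real.rpow_le_rpow_of_nonpos hRpos hRK he.le
    have h2 : K ^ e = Q₁ := by
      rw [hK, ← Real.rpow_mul hQ₁pos.le, one_div, inv_mul_cancel₀ he.ne, Real.rpow_one]
    calc (1:ℝ) ≤ Q₁ := le_max_right _ _
      _ = K ^ e := h2.symm
      _ ≤ _ := h1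

section Main

set_option linter.unusedSectionVars false

variable {X : Type*} [MetricSpace X] [MeasurableSpace X] (μ : Measure X) [IsProbabilityMeasure μ]

/-- The uniform quasi-Assouad upper bound, valid for all `0 < r ≤ R`. -/
lemma star {D : ℝ} (hD : 0 ≤ D)
    (hqA : ∀ δ : ℝ, 0 < δ → ∃ s ∈ upperHSet μ δ, s ≤ D) {δ : ℝ} (hδ : 0 < δ) :
    ∃ C > (0:ℝ), ∃ ρ₀ : ℝ, 0 < ρ₀ ∧ ρ₀ ≤ 1 ∧ ∀ x ∈ msupp μ, ∀ r R : ℝ,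
      0 < r → r ≤ R → R ≤ ρ₀ →
      mm μ x R ≤ C * R ^ (-(δ * D)) * (R / r) ^ D * mm μ x r := by
  obtain ⟨s, ⟨hs0, c₁, hc₁, c₂, hc₂, hbound⟩, hsD⟩ := hqA δ hδ
  have h1δ : (0:ℝ) < 1 + δ := by linarith
  set M : ℝ := min c₁ 1 with hM
  have hMpos : 0 < M := lt_min hc₁ one_pos
  have hM1 : M ≤ 1 := min_le_right _ _
  refine ⟨c₂, hc₂, M ^ (1 / (1 + δ)), Real.rpow_pos_of_pos hMpos _,
    Real.rpow_le_one hMpos.le hM1 (by positivity), ?_⟩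
  intro x hx r R hr hrR hRρ
  have hR : 0 < R := lt_of_lt_of_le hr hrR
  have hpow : R ^ (1 + δ) ≤ M := by
    have h1 : R ^ (1 + δ) ≤ (M ^ (1 / (1 + δ))) ^ (1 + δ) :=
      Real.rpow_le_rpow hR.le hRρ h1δ.le
    rwa [← Real.rpow_mul hMpos.le, one_div, inv_mul_cancel₀ h1δ.ne', Real.rpow_one] at h1
  have hRc₁ : R ^ (1 + δ) ≤ c₁ := le_trans hpow (min_le_left _ _)
  have hR1 : R ≤ 1 := le_trans hRρ (Real.rpow_le_one hMpos.le hM1 (by positivity))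
  have hRδR : R ^ (1 + δ) ≤ R := by
    have := Real.rpow_le_rpow_of_exponent_ge hR hR1 (by linarith : (1:ℝ) ≤ 1 + δ)
    rwa [Real.rpow_one] at this
  have hRr1 : 1 ≤ R / r := (one_le_div hr).2 hrR
  have hRneg1 : 1 ≤ R ^ (-(δ * D)) :=
    Real.one_le_rpow_of_pos_of_le_one_of_nonpos hR hR1 (by nlinarith)
  have hmr : 0 ≤ mm μ x r := mm_nonneg μ x r
  rcases le_or_gt r (R ^ (1 + δ)) with hcase | hcase
  · have hb := hbound x hx r R hr hR hcase hRc₁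
    have h2 : c₂ * (R / r) ^ s * mm μ x r ≤ c₂ * (R / r) ^ D * mm μ x r := by
      gcongr c₂ * ?_ * mm μ x r
      exact Real.rpow_le_rpow_of_exponent_le hRr1 hsD
    have h3 : c₂ * (R / r) ^ D * mm μ x r ≤ c₂ * R ^ (-(δ * D)) * (R / r) ^ D * mm μ x r := by
      have e1 : c₂ * (R / r) ^ D * mm μ x r = c₂ * 1 * (R / r) ^ D * mm μ x r := by ring
      rw [e1]
      gcongr
    exact le_trans hb (le_trans h2 h3)
  · have hb := hbound x hx (R ^ (1 + δ)) R (Real.rpow_pos_of_pos hR _) hR le_rfl hRc₁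
    have hmono : mm μ x (R ^ (1 + δ)) ≤ mm μ x r := mm_mono μ x hcase.le
    have hratio : R / R ^ (1 + δ) = R ^ (-δ) := by
      have h := Real.rpow_sub hR 1 (1 + δ)
      rw [Real.rpow_one] at h
      rw [← h]
      norm_num
    have hRδs : (R ^ (-δ)) ^ s ≤ R ^ (-(δ * D)) := by
      rw [← Real.rpow_mul hR.le]
      exact Real.rpow_le_rpow_of_exponent_ge hR hR1 (by nlinarith)
    have hone : 1 ≤ (R / r) ^ D := by
      calc (1:ℝ) = (R / r) ^ (0:ℝ) := (Real.rpow_zero _).symm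
        _ ≤ (R / r) ^ D := Real.rpow_le_rpow_of_exponent_le hRr1 hD
    rw [hratio] at hb
    calc mm μ x R ≤ c₂ * (R ^ (-δ)) ^ s * mm μ x (R ^ (1 + δ)) := hb
      _ ≤ c₂ * R ^ (-(δ * D)) * mm μ x r := by
          apply mul_le_mul _ hmono (mm_nonneg μ x _) (by positivity)
          exact mul_le_mul_of_nonneg_left hRδs hc₂.le
      _ = c₂ * R ^ (-(δ * D)) * 1 * mm μ x r := by ring
      _ ≤ c₂ * R ^ (-(δ * D)) * (R / r) ^ D * mm μ x r := by gcongr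

lemma theta_facts {θ : ℝ} (hθ : θ ∈ Set.Ioo (0:ℝ) 1) : 0 < θ ∧ θ < 1 ∧ 1 < 1/θ ∧ 0 < 1/θ - 1 := by
  obtain ⟨h0, h1⟩ := hθ
  refine ⟨h0, h1, ?_, ?_⟩
  · rw [lt_div_iff₀ h0]; linarith
  · rw [sub_pos, lt_div_iff₀ h0]; linarith

/-- The ratio `R / R^(1/θ)` equals `R ^ (1 - 1/θ)`. -/
lemma ratio_eq {R θ : ℝ} (hR : 0 < R) : R / R ^ (1/θ) = R ^ (1 - 1/θ) := by
  have h := Real.rpow_sub hR 1 (1/θ)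
  rw [Real.rpow_one] at h
  rw [← h]

lemma mem_ESet_of_mem_upperHSet {θ : ℝ} (hθ : θ ∈ Set.Ioo (0:ℝ) 1) {s : ℝ}
    (hs : s ∈ upperHSet μ (1/θ - 1)) : s ∈ ESet μ θ := by
  obtain ⟨hθ0, hθ1, hθinv, hθδ⟩ := theta_facts hθ
  obtain ⟨hs0, c₁, hc₁, c₂, hc₂, hb⟩ := hs
  have he : (1:ℝ) + (1/θ - 1) = 1/θ := by ring
  simp only [he] at hb
  set M : ℝ := min c₁ 1 with hM
  have hMpos : 0 < M := lt_min hc₁ one_pos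
  refine ⟨hs0, c₂, hc₂, M ^ θ, Real.rpow_pos_of_pos hMpos _, ?_⟩
  intro x hx R hR hR0
  have hRθ : R ^ (1/θ) ≤ c₁ := by
    have h1 : R ^ (1/θ) ≤ (M ^ θ) ^ (1/θ) := Real.rpow_le_rpow hR.le hR0 (by positivity)
    rw [← Real.rpow_mul hMpos.le, mul_one_div, div_self hθ0.ne', Real.rpow_one] at h1
    exact le_trans h1 (min_le_left _ _)
  have hb2 := hb x hx (R ^ (1/θ)) R (Real.rpow_pos_of_pos hR _) hR le_rfl hRθ
  rwa [ratio_eq hR] at hb2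

lemma mem_LSet_of_mem_lowerHSet {θ : ℝ} (hθ : θ ∈ Set.Ioo (0:ℝ) 1) {s : ℝ}
    (hs : s ∈ lowerHSet μ (1/θ - 1)) : s ∈ LSet μ θ := by
  obtain ⟨hθ0, hθ1, hθinv, hθδ⟩ := theta_facts hθ
  obtain ⟨hs0, c₁, hc₁, c₂, hc₂, hb⟩ := hs
  have he : (1:ℝ) + (1/θ - 1) = 1/θ := by ring
  simp only [he] at hb
  set M : ℝ := min c₁ 1 with hM
  have hMpos : 0 < M := lt_min hc₁ one_pos
  refine ⟨hs0, c₂, hc₂, M ^ θ, Real.rpow_pos_of_pos hMpos _, ?_⟩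
  intro x hx R hR hR0
  have hRθ : R ^ (1/θ) ≤ c₁ := by
    have h1 : R ^ (1/θ) ≤ (M ^ θ) ^ (1/θ) := Real.rpow_le_rpow hR.le hR0 (by positivity)
    rw [← Real.rpow_mul hMpos.le, mul_one_div, div_self hθ0.ne', Real.rpow_one] at h1
    exact le_trans h1 (min_le_left _ _)
  have hb2 := hb x hx (R ^ (1/θ)) R (Real.rpow_pos_of_pos hR _) hR le_rfl hRθ
  rwa [ratio_eq hR] at hb2

lemma le_one_of_rpow_le_one {R e : ℝ} (hR : 0 < R) (he : 0 < e) (h : R ^ e ≤ 1) : R ≤ 1 := by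
  by_contra hlt
  push_neg at hlt
  have h2 : (1:ℝ) ^ e < R ^ e := Real.rpow_lt_rpow (by norm_num) hlt he
  rw [Real.one_rpow] at h2
  linarith

lemma zero_mem_lowerHSet {δ : ℝ} (hδ : 0 < δ) : (0:ℝ) ∈ lowerHSet μ δ := by
  refine ⟨le_rfl, 1, one_pos, 1, one_pos, ?_⟩
  intro x hx r R hr hR hrR hR1
  have hR1' : R ≤ 1 := le_one_of_rpow_le_one hR (by linarith) hR1
  have hRδ : R ^ (1 + δ) ≤ R := by
    have := Real.rpow_le_rpow_of_exponent_ge hR hR1' (by linarith : (1:ℝ) ≤ 1 + δ)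
    rwa [Real.rpow_one] at this
  rw [Real.rpow_zero, one_mul, one_mul]
  exact mm_mono μ x (le_trans hrR hRδ)

lemma zero_mem_LSet {θ : ℝ} (hθ : θ ∈ Set.Ioo (0:ℝ) 1) : (0:ℝ) ∈ LSet μ θ := by
  obtain ⟨hθ0, hθ1, hθinv, hθδ⟩ := theta_facts hθ
  refine ⟨le_rfl, 1, one_pos, 1, one_pos, ?_⟩
  intro x hx R hR hR0
  have hRθ : R ^ (1/θ) ≤ R := by
    have := Real.rpow_le_rpow_of_exponent_ge hR hR0 hθinv.le
    rwa [Real.rpow_one] at this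
  rw [Real.rpow_zero, one_mul, one_mul]
  exact mm_mono μ x hRθ

lemma LSet_le_ESet {θ : ℝ} (hθ : θ ∈ Set.Ioo (0:ℝ) 1) (hne : (msupp μ).Nonempty)
    {sl su : ℝ} (hl : sl ∈ LSet μ θ) (hu : su ∈ ESet μ θ) : sl ≤ su := by
  obtain ⟨hθ0, hθ1, hθinv, hθδ⟩ := theta_facts hθ
  obtain ⟨x₀, hx₀⟩ := hne
  obtain ⟨hl0, cl, hcl, Rl, hRl, hbl⟩ := hl
  obtain ⟨hu0, cu, hcu, Ru, hRu, hbu⟩ := hu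
  apply exp_le_of_forall_large hcl hcu
  intro Q₀
  have he : (1:ℝ) - 1/θ < 0 := by linarith
  obtain ⟨R, hR, hRmax, hR1, hQ₀, hQ1⟩ :=
    rpow_neg_exp_large he Q₀ (min Rl Ru) (lt_min hRl hRu)
  refine ⟨R ^ ((1:ℝ) - 1/θ), hQ₀, hQ1, ?_⟩
  have h1 := hbl x₀ hx₀ R hR (le_trans hRmax (min_le_left _ _))
  have h2 := hbu x₀ hx₀ R hR (le_trans hRmax (min_le_right _ _))
  have hm : 0 < mm μ x₀ (R ^ (1/θ)) := mm_pos μ hx₀ (Real.rpow_pos_of_pos hR _)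
  have := le_trans h1 h2
  exact le_of_mul_le_mul_right this hm

lemma lowerHSet_le_upperHSet {δ : ℝ} (hδ : 0 < δ) (hne : (msupp μ).Nonempty)
    {sl su : ℝ} (hl : sl ∈ lowerHSet μ δ) (hu : su ∈ upperHSet μ δ) : sl ≤ su := by
  obtain ⟨x₀, hx₀⟩ := hne
  obtain ⟨hl0, c₁, hc₁, c₂, hc₂, hbl⟩ := hl
  obtain ⟨hu0, d₁, hd₁, d₂, hd₂, hbu⟩ := hu
  have h1δ : (0:ℝ) < 1 + δ := by linarith
  apply exp_le_of_forall_large hc₂ hd₂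
  intro Q₀
  set M : ℝ := min (min c₁ d₁) 1 with hM
  have hMpos : 0 < M := lt_min (lt_min hc₁ hd₁) one_pos
  obtain ⟨R, hR, hRmax, hR1, hQ₀, hQ1⟩ :=
    rpow_neg_exp_large (by linarith : -δ < 0) Q₀ (M ^ (1/(1+δ)))
      (Real.rpow_pos_of_pos hMpos _)
  have hpow : R ^ (1 + δ) ≤ M := by
    have h1 : R ^ (1 + δ) ≤ (M ^ (1/(1+δ))) ^ (1 + δ) := Real.rpow_le_rpow hR.le hRmax h1δ.le
    rwa [← Real.rpow_mul hMpos.le, one_div, inv_mul_cancel₀ h1δ.ne', Real.rpow_one] at h1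
  have hr : 0 < R ^ (1 + δ) := Real.rpow_pos_of_pos hR _
  have hratio : R / R ^ (1 + δ) = R ^ (-δ) := by
    have h := Real.rpow_sub hR 1 (1 + δ)
    rw [Real.rpow_one] at h
    rw [← h]; norm_num
  refine ⟨R ^ (-δ), hQ₀, hQ1, ?_⟩
  have h1 := hbl x₀ hx₀ (R ^ (1 + δ)) R hr hR le_rfl
    (le_trans hpow (le_trans (min_le_left _ _) (min_le_left _ _)))
  have h2 := hbu x₀ hx₀ (R ^ (1 + δ)) R hr hR le_rfl
    (le_trans hpow (le_trans (min_le_left _ _) (min_le_right _ _)))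
  rw [hratio] at h1 h2
  have hm : 0 < mm μ x₀ (R ^ (1 + δ)) := mm_pos μ hx₀ hr
  exact le_of_mul_le_mul_right (le_trans h1 h2) hm

/-- Moving the upper spectrum up (towards 1) only needs monotonicity. -/
lemma mem_ESet_up {θ θ' : ℝ} (hθ : θ ∈ Set.Ioo (0:ℝ) 1) (hθ' : θ' ∈ Set.Ioo (0:ℝ) 1)
    (hlt : θ < θ') {s s' : ℝ} (hs : s ∈ ESet μ θ) (hs'0 : 0 ≤ s')
    (hcomp : (1/θ - 1) * s ≤ (1/θ' - 1) * s') : s' ∈ ESet μ θ' := by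
  obtain ⟨hθ0, hθ1, hθinv, hθδ⟩ := theta_facts hθ
  obtain ⟨hθ'0, hθ'1, hθ'inv, hθ'δ⟩ := theta_facts hθ'
  obtain ⟨hs0, c, hc, R₀, hR₀, hb⟩ := hs
  refine ⟨hs'0, c, hc, min R₀ 1, lt_min hR₀ one_pos, ?_⟩
  intro x hx R hR hRle
  have hR1 : R ≤ 1 := le_trans hRle (min_le_right _ _)
  have h1 := hb x hx R hR (le_trans hRle (min_le_left _ _))
  rw [← Real.rpow_mul hR.le] at h1 ⊢
  have hexp : R ^ ((1 - 1/θ) * s) ≤ R ^ ((1 - 1/θ') * s') :=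
    Real.rpow_le_rpow_of_exponent_ge hR hR1 (by nlinarith)
  have hmono : mm μ x (R ^ (1/θ)) ≤ mm μ x (R ^ (1/θ')) := by
    apply mm_mono
    exact Real.rpow_le_rpow_of_exponent_ge hR hR1 (by
      rw [div_le_div_iff₀ hθ'0 hθ0]; nlinarith)
  calc mm μ x R ≤ c * R ^ ((1 - 1/θ) * s) * mm μ x (R ^ (1/θ)) := h1
    _ ≤ c * R ^ ((1 - 1/θ') * s') * mm μ x (R ^ (1/θ')) := by
        apply mul_le_mul _ hmono (mm_nonneg μ x _) (by positivity)
        exact mul_le_mul_of_nonneg_left hexp hc.le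

/-- Moving the lower spectrum down only needs monotonicity. -/
lemma mem_LSet_down {θ θ' : ℝ} (hθ : θ ∈ Set.Ioo (0:ℝ) 1) (hθ' : θ' ∈ Set.Ioo (0:ℝ) 1)
    (hlt : θ' < θ) {s s' : ℝ} (hs : s ∈ LSet μ θ) (hs'0 : 0 ≤ s')
    (hcomp : (1/θ' - 1) * s' ≤ (1/θ - 1) * s) : s' ∈ LSet μ θ' := by
  obtain ⟨hθ0, hθ1, hθinv, hθδ⟩ := theta_facts hθ
  obtain ⟨hθ'0, hθ'1, hθ'inv, hθ'δ⟩ := theta_facts hθ'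
  obtain ⟨hs0, c, hc, R₀, hR₀, hb⟩ := hs
  refine ⟨hs'0, c, hc, min R₀ 1, lt_min hR₀ one_pos, ?_⟩
  intro x hx R hR hRle
  have hR1 : R ≤ 1 := le_trans hRle (min_le_right _ _)
  have h1 := hb x hx R hR (le_trans hRle (min_le_left _ _))
  rw [← Real.rpow_mul hR.le] at h1 ⊢
  have hexp : R ^ ((1 - 1/θ') * s') ≤ R ^ ((1 - 1/θ) * s) :=
    Real.rpow_le_rpow_of_exponent_ge hR hR1 (by nlinarith)
  have hmono : mm μ x (R ^ (1/θ')) ≤ mm μ x (R ^ (1/θ)) := by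
    apply mm_mono
    exact Real.rpow_le_rpow_of_exponent_ge hR hR1 (by
      rw [div_le_div_iff₀ hθ0 hθ'0]; nlinarith)
  calc c * R ^ ((1 - 1/θ') * s') * mm μ x (R ^ (1/θ'))
      ≤ c * R ^ ((1 - 1/θ) * s) * mm μ x (R ^ (1/θ)) := by
        apply mul_le_mul _ hmono (mm_nonneg μ x _) (by positivity)
        exact mul_le_mul_of_nonneg_left hexp hc.le
    _ ≤ mm μ x R := h1

/-- Moving the upper spectrum down, using the quasi-Assouad bound. -/
lemma mem_ESet_down {D : ℝ} (hD : 0 ≤ D)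
    (hqA : ∀ δ : ℝ, 0 < δ → ∃ s ∈ upperHSet μ δ, s ≤ D)
    {θ θ' : ℝ} (hθ : θ ∈ Set.Ioo (0:ℝ) 1) (hθ' : θ' ∈ Set.Ioo (0:ℝ) 1)
    (hlt : θ' < θ) {s s' ξ : ℝ} (hs : s ∈ ESet μ θ) (hs'0 : 0 ≤ s') (hξ : 0 < ξ)
    (hcomp : (1/θ - 1) * s + (1/θ' - 1/θ) * D + ξ ≤ (1/θ' - 1) * s') : s' ∈ ESet μ θ' := by
  obtain ⟨hθ0, hθ1, hθinv, hθδ⟩ := theta_facts hθ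
  obtain ⟨hθ'0, hθ'1, hθ'inv, hθ'δ⟩ := theta_facts hθ'
  obtain ⟨hs0, c, hc, R₀, hR₀, hb⟩ := hs
  set δ₂ : ℝ := ξ * θ / (D + 1) with hδ₂def
  have hδ₂ : 0 < δ₂ := by positivity
  obtain ⟨C, hC, ρ₀, hρ₀, hρ₀1, hstar⟩ := star μ hD hqA hδ₂
  refine ⟨hs'0, c * C, by positivity, min R₀ (min ρ₀ 1), lt_min hR₀ (lt_min hρ₀ one_pos), ?_⟩
  intro x hx R hR hRle
  have hR1 : R ≤ 1 := le_trans hRle (le_trans (min_le_right _ _) (min_le_right _ _))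
  have h1 := hb x hx R hR (le_trans hRle (min_le_left _ _))
  have hRθpos : (0:ℝ) < R ^ (1/θ) := Real.rpow_pos_of_pos hR _
  have hRθ'pos : (0:ℝ) < R ^ (1/θ') := Real.rpow_pos_of_pos hR _
  have hss : R ^ (1/θ') ≤ R ^ (1/θ) := by
    apply Real.rpow_le_rpow_of_exponent_ge hR hR1
    rw [div_le_div_iff₀ hθ0 hθ'0]; nlinarith
  have hsρ : R ^ (1/θ) ≤ ρ₀ := by
    have h2 : R ^ (1/θ) ≤ R ^ (1:ℝ) := Real.rpow_le_rpow_of_exponent_ge hR hR1 hθinv.le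
    rw [Real.rpow_one] at h2
    exact le_trans h2 (le_trans hRle (le_trans (min_le_right _ _) (min_le_left _ _)))
  have h2 := hstar x hx (R ^ (1/θ')) (R ^ (1/θ)) hRθ'pos hss hsρ
  have e1 : (R ^ (1/θ:ℝ)) ^ (-(δ₂ * D)) = R ^ (1/θ * (-(δ₂ * D))) := (Real.rpow_mul hR.le _ _).symm
  have e2 : (R ^ (1/θ:ℝ)) / (R ^ (1/θ':ℝ)) = R ^ (1/θ - 1/θ') := (Real.rpow_sub hR _ _).symm
  have e3 : (R ^ (1/θ - 1/θ':ℝ)) ^ D = R ^ ((1/θ - 1/θ') * D) := (Real.rpow_mul hR.le _ _).symm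
  rw [e1, e2, e3] at h2
  rw [← Real.rpow_mul hR.le] at h1 ⊢
  calc mm μ x R ≤ c * R ^ ((1 - 1/θ) * s) * mm μ x (R ^ (1/θ)) := h1
    _ ≤ c * R ^ ((1 - 1/θ) * s) *
        (C * R ^ (1/θ * (-(δ₂ * D))) * R ^ ((1/θ - 1/θ') * D) * mm μ x (R ^ (1/θ'))) := by
        apply mul_le_mul_of_nonneg_left h2 (by positivity)
    _ = (c * C) * R ^ ((1 - 1/θ) * s + 1/θ * (-(δ₂ * D)) + (1/θ - 1/θ') * D)
          * mm μ x (R ^ (1/θ')) := by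
        rw [Real.rpow_add hR, Real.rpow_add hR]; ring
    _ ≤ (c * C) * R ^ ((1 - 1/θ') * s') * mm μ x (R ^ (1/θ')) := by
        apply mul_le_mul_of_nonneg_right _ (mm_nonneg μ x _)
        apply mul_le_mul_of_nonneg_left _ (by positivity)
        apply Real.rpow_le_rpow_of_exponent_ge hR hR1
        have hδ₂D : 1/θ * (δ₂ * D) ≤ ξ := by
          rw [hδ₂def]
          have h : 1/θ * (ξ * θ / (D+1) * D) = ξ * (D / (D+1)) := by field_simp
          rw [h]
          have hd1 : D / (D+1) ≤ 1 := by rw [div_le_one (by linarith)]; linarith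
          nlinarith
        nlinarith

/-- Moving the lower spectrum up, using the quasi-Assouad bound. -/
lemma mem_LSet_up {D : ℝ} (hD : 0 ≤ D)
    (hqA : ∀ δ : ℝ, 0 < δ → ∃ s ∈ upperHSet μ δ, s ≤ D)
    {θ θ' : ℝ} (hθ : θ ∈ Set.Ioo (0:ℝ) 1) (hθ' : θ' ∈ Set.Ioo (0:ℝ) 1)
    (hlt : θ < θ') {s s' ξ : ℝ} (hs : s ∈ LSet μ θ) (hs'0 : 0 ≤ s') (hξ : 0 < ξ)
    (hcomp : (1/θ' - 1) * s' ≤ (1/θ - 1) * s - (1/θ - 1/θ') * D - ξ) : s' ∈ LSet μ θ' := by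
  obtain ⟨hθ0, hθ1, hθinv, hθδ⟩ := theta_facts hθ
  obtain ⟨hθ'0, hθ'1, hθ'inv, hθ'δ⟩ := theta_facts hθ'
  obtain ⟨hs0, c, hc, R₀, hR₀, hb⟩ := hs
  set δ₂ : ℝ := ξ * θ' / (D + 1) with hδ₂def
  have hδ₂ : 0 < δ₂ := by positivity
  obtain ⟨C, hC, ρ₀, hρ₀, hρ₀1, hstar⟩ := star μ hD hqA hδ₂
  refine ⟨hs'0, c / C, by positivity, min R₀ (min ρ₀ 1), lt_min hR₀ (lt_min hρ₀ one_pos), ?_⟩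
  intro x hx R hR hRle
  have hR1 : R ≤ 1 := le_trans hRle (le_trans (min_le_right _ _) (min_le_right _ _))
  have h1 := hb x hx R hR (le_trans hRle (min_le_left _ _))
  have hRθpos : (0:ℝ) < R ^ (1/θ) := Real.rpow_pos_of_pos hR _
  have hRθ'pos : (0:ℝ) < R ^ (1/θ') := Real.rpow_pos_of_pos hR _
  have hss : R ^ (1/θ) ≤ R ^ (1/θ') := by
    apply Real.rpow_le_rpow_of_exponent_ge hR hR1
    rw [div_le_div_iff₀ hθ'0 hθ0]; nlinarith
  have hsρ : R ^ (1/θ') ≤ ρ₀ := by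
    have h2 : R ^ (1/θ') ≤ R ^ (1:ℝ) := Real.rpow_le_rpow_of_exponent_ge hR hR1 hθ'inv.le
    rw [Real.rpow_one] at h2
    exact le_trans h2 (le_trans hRle (le_trans (min_le_right _ _) (min_le_left _ _)))
  have h2 := hstar x hx (R ^ (1/θ)) (R ^ (1/θ')) hRθpos hss hsρ
  have e1 : (R ^ (1/θ':ℝ)) ^ (-(δ₂ * D)) = R ^ (1/θ' * (-(δ₂ * D))) := (Real.rpow_mul hR.le _ _).symm
  have e2 : (R ^ (1/θ':ℝ)) / (R ^ (1/θ:ℝ)) = R ^ (1/θ' - 1/θ) := (Real.rpow_sub hR _ _).symm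
  have e3 : (R ^ (1/θ' - 1/θ:ℝ)) ^ D = R ^ ((1/θ' - 1/θ) * D) := (Real.rpow_mul hR.le _ _).symm
  rw [e1, e2, e3] at h2
  rw [← Real.rpow_mul hR.le] at h1 ⊢
  have hδ₂D : 1/θ' * (δ₂ * D) ≤ ξ := by
    rw [hδ₂def]
    have h : 1/θ' * (ξ * θ' / (D+1) * D) = ξ * (D / (D+1)) := by field_simp
    rw [h]
    have hd1 : D / (D+1) ≤ 1 := by rw [div_le_one (by linarith)]; linarith
    nlinarith
  calc c / C * R ^ ((1 - 1/θ') * s') * mm μ x (R ^ (1/θ'))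
      ≤ c / C * R ^ ((1 - 1/θ') * s') *
        (C * R ^ (1/θ' * (-(δ₂ * D))) * R ^ ((1/θ' - 1/θ) * D) * mm μ x (R ^ (1/θ))) := by
        apply mul_le_mul_of_nonneg_left h2 (by positivity)
    _ = (c / C * C) * (R ^ ((1 - 1/θ') * s') * R ^ (1/θ' * (-(δ₂ * D))) * R ^ ((1/θ' - 1/θ) * D))
          * mm μ x (R ^ (1/θ)) := by ring
    _ = c * R ^ ((1 - 1/θ') * s' + 1/θ' * (-(δ₂ * D)) + (1/θ' - 1/θ) * D)
          * mm μ x (R ^ (1/θ)) := by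
        rw [div_mul_cancel₀ _ hC.ne', ← Real.rpow_add hR, ← Real.rpow_add hR]
    _ ≤ c * R ^ ((1 - 1/θ) * s) * mm μ x (R ^ (1/θ)) := by
        apply mul_le_mul_of_nonneg_right _ (mm_nonneg μ x _)
        apply mul_le_mul_of_nonneg_left _ hc.le
        apply Real.rpow_le_rpow_of_exponent_ge hR hR1
        nlinarith
    _ ≤ mm μ x R := h1

lemma exists_pow_sandwich {u t : ℝ} (hu : 1 < u) (ht : 1 ≤ t) :
    ∃ k : ℕ, u ^ k ≤ t ∧ t < u ^ (k + 1) := by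
  classical
  have h : ∃ n : ℕ, t < u ^ n := pow_unbounded_of_one_lt t hu
  set n := Nat.find h with hn
  have hspec : t < u ^ n := Nat.find_spec h
  have hn0 : n ≠ 0 := by
    intro h0
    rw [h0, pow_zero] at hspec
    linarith
  refine ⟨n - 1, ?_, ?_⟩
  · have hmin := Nat.find_min h (Nat.pred_lt hn0)
    push_neg at hmin
    exact hmin
  · have hne : n - 1 + 1 = n := by omega
    rwa [hne]

/-- Choose the step index `k` so that `R^{u^{k+1}} < r ≤ R^{u^k}` where `u = 1/θ`. -/
lemma scale_select {R r δ u : ℝ} (hr : 0 < r) (hR0 : 0 < R) (hR : R < 1)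
    (hδ : 0 < δ) (hrR : r ≤ R ^ (1 + δ)) (hu : 1 < u) :
    ∃ k : ℕ, r ≤ R ^ (u ^ k) ∧ R ^ (u ^ (k + 1)) < r := by
  have hlogR : Real.log R < 0 := Real.log_neg hR0 hR
  have hlr : Real.log r ≤ (1 + δ) * Real.log R := by
    have h1 : Real.log r ≤ Real.log (R ^ (1 + δ)) := Real.log_le_log hr hrR
    rwa [Real.log_rpow hR0] at h1
  set t : ℝ := Real.log r / Real.log R with htdef
  have ht : 1 + δ ≤ t := (le_div_iff_of_neg hlogR).2 (by linarith [hlr])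
  obtain ⟨k, hk1, hk2⟩ := exists_pow_sandwich hu (by linarith : (1:ℝ) ≤ t)
  refine ⟨k, ?_, ?_⟩
  · have h2 : Real.log r ≤ u ^ k * Real.log R := (le_div_iff_of_neg hlogR).1 hk1
    calc r = Real.exp (Real.log r) := (Real.exp_log hr).symm
      _ ≤ Real.exp (Real.log R * u ^ k) := Real.exp_le_exp.2 (by linarith)
      _ = R ^ (u ^ k) := (Real.rpow_def_of_pos hR0 _).symm
  · have h2 : u ^ (k + 1) * Real.log R < Real.log r := (div_lt_iff_of_neg hlogR).1 hk2
    calc R ^ (u ^ (k + 1)) = Real.exp (Real.log R * u ^ (k + 1)) := Real.rpow_def_of_pos hR0 _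
      _ < Real.exp (Real.log r) := Real.exp_lt_exp.2 (by linarith)
      _ = r := Real.exp_log hr

/-- From `r ≤ R^(1+δ)`: the inverse scale bound `r⁻¹ ≤ (R/r) ^ ((1+δ)/δ)`. -/
lemma inv_scale_bound {R r δ : ℝ} (hr : 0 < r) (hR0 : 0 < R) (hδ : 0 < δ)
    (hrR : r ≤ R ^ (1 + δ)) : r⁻¹ ≤ (R / r) ^ ((1 + δ) / δ) := by
  have h1δ : (0:ℝ) < 1 + δ := by linarith
  have h1 : r ^ ((1:ℝ) / (1 + δ)) ≤ R := by
    have h2 : r ^ ((1:ℝ) / (1 + δ)) ≤ (R ^ (1 + δ)) ^ ((1:ℝ) / (1 + δ)) :=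
      Real.rpow_le_rpow hr.le hrR (by positivity)
    rwa [← Real.rpow_mul hR0.le, mul_one_div, div_self h1δ.ne', Real.rpow_one] at h2
  have h3 : r ^ ((1:ℝ) / (1 + δ) - 1) ≤ R / r := by
    rw [Real.rpow_sub hr, Real.rpow_one]
    gcongr
  have h4 : (r ^ ((1:ℝ) / (1 + δ) - 1)) ^ ((1 + δ) / δ) ≤ (R / r) ^ ((1 + δ) / δ) :=
    Real.rpow_le_rpow (Real.rpow_pos_of_pos hr _).le h3 (by positivity)
  have h5 : (r ^ ((1:ℝ) / (1 + δ) - 1)) ^ ((1 + δ) / δ) = r⁻¹ := by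
    rw [← Real.rpow_mul hr.le]
    have he : ((1:ℝ) / (1 + δ) - 1) * ((1 + δ) / δ) = -1 := by field_simp; ring
    rw [he, Real.rpow_neg_one]
  rwa [h5] at h4

/-- `r ^ (-b) ≤ (R/r) ^ (b * ((1+δ)/δ))` for `b ≥ 0`. -/
lemma rpow_neg_scale_bound {R r δ b : ℝ} (hr : 0 < r) (hR0 : 0 < R) (hδ : 0 < δ)
    (hb : 0 ≤ b) (hrR : r ≤ R ^ (1 + δ)) :
    r ^ (-b) ≤ (R / r) ^ (b * ((1 + δ) / δ)) := by
  have h1 := inv_scale_bound hr hR0 hδ hrR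
  have h2 : (r⁻¹) ^ b ≤ ((R / r) ^ ((1 + δ) / δ)) ^ b :=
    Real.rpow_le_rpow (by positivity) h1 hb
  rwa [← Real.rpow_neg_one r, ← Real.rpow_mul hr.le, neg_one_mul,
    ← Real.rpow_mul (by positivity : (0:ℝ) ≤ R / r), div_mul_eq_mul_div, mul_div_assoc,
    ← mul_div_assoc, mul_comm ((1:ℝ)+δ) b, mul_div_assoc] at h2

/-- `(R/r) ^ (-(b * ((1+δ)/δ))) ≤ r ^ b` for `b ≥ 0`. -/
lemma rpow_pos_scale_bound {R r δ b : ℝ} (hr : 0 < r) (hR0 : 0 < R) (hδ : 0 < δ)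
    (hb : 0 ≤ b) (hrR : r ≤ R ^ (1 + δ)) :
    (R / r) ^ (-(b * ((1 + δ) / δ))) ≤ r ^ b := by
  have h1 := rpow_neg_scale_bound hr hR0 hδ hb hrR
  have hq : (0:ℝ) < R / r := by positivity
  have h2 : ((R / r) ^ (b * ((1 + δ) / δ)))⁻¹ ≤ (r ^ (-b))⁻¹ :=
    inv_anti₀ (Real.rpow_pos_of_pos hr _) h1
  rwa [← Real.rpow_neg hq.le, ← Real.rpow_neg hr.le, neg_neg] at h2

/-- Iterated application of the single-scale upper bound, with the constant absorbed. -/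
lemma iterate_upper {θ : ℝ} (hθ : θ ∈ Set.Ioo (0:ℝ) 1) {s ε c R₀ R₁ : ℝ}
    (hc : 0 < c) (hε : 0 < ε) (hs0 : 0 ≤ s)
    (hb : ∀ x ∈ msupp μ, ∀ R : ℝ, 0 < R → R ≤ R₀ →
      mm μ x R ≤ c * (R ^ (1 - 1/θ)) ^ s * mm μ x (R ^ (1/θ)))
    (hR₁0 : 0 < R₁) (hR₁R₀ : R₁ ≤ R₀) (hR₁1 : R₁ ≤ 1)
    (habs : ∀ ρ : ℝ, 0 < ρ → ρ ≤ R₁ → c ≤ ρ ^ (-((1/θ - 1) * ε))) :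
    ∀ k : ℕ, ∀ x ∈ msupp μ, ∀ R : ℝ, 0 < R → R ≤ R₁ →
      mm μ x R ≤ (R / R ^ ((1/θ) ^ k)) ^ (s + ε) * mm μ x (R ^ ((1/θ) ^ k)) := by
  obtain ⟨hθ0, hθ1, hθinv, hθδ⟩ := theta_facts hθ
  intro k
  induction k with
  | zero =>
    intro x hx R hR hRle
    rw [pow_zero, Real.rpow_one, div_self hR.ne', Real.one_rpow, one_mul]
  | succ k ih =>
    intro x hx R hR hRle
    set ρ : ℝ := R ^ ((1/θ) ^ k) with hρdef
    have hρpos : 0 < ρ := Real.rpow_pos_of_pos hR _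
    have huk : (1:ℝ) ≤ (1/θ) ^ k := one_le_pow₀ hθinv.le
    have hρR : ρ ≤ R := by
      have := Real.rpow_le_rpow_of_exponent_ge hR (le_trans hRle hR₁1) huk
      rwa [Real.rpow_one] at this
    have hρR₁ : ρ ≤ R₁ := le_trans hρR hRle
    have hstep := hb x hx ρ hρpos (le_trans hρR₁ hR₁R₀)
    have hnext : ρ ^ ((1:ℝ)/θ) = R ^ ((1/θ) ^ (k+1)) := by
      rw [hρdef, ← Real.rpow_mul hR.le, ← pow_succ]
    have hXpos : (0:ℝ) < ρ ^ ((1:ℝ) - 1/θ) := Real.rpow_pos_of_pos hρpos _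
    have habs2 : c ≤ (ρ ^ ((1:ℝ) - 1/θ)) ^ ε := by
      rw [← Real.rpow_mul hρpos.le]
      have he : ((1:ℝ) - 1/θ) * ε = -((1/θ - 1) * ε) := by ring
      rw [he]
      exact habs ρ hρpos hρR₁
    have hstep2 : mm μ x ρ ≤ (ρ ^ ((1:ℝ) - 1/θ)) ^ (s + ε) * mm μ x (R ^ ((1/θ) ^ (k+1))) := by
      rw [← hnext]
      calc mm μ x ρ ≤ c * (ρ ^ ((1:ℝ) - 1/θ)) ^ s * mm μ x (ρ ^ ((1:ℝ)/θ)) := by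
            have := hstep
            rwa [one_div] at this ⊢
        _ ≤ (ρ ^ ((1:ℝ) - 1/θ)) ^ ε * (ρ ^ ((1:ℝ) - 1/θ)) ^ s * mm μ x (ρ ^ ((1:ℝ)/θ)) := by
            apply mul_le_mul_of_nonneg_right _ (mm_nonneg μ x _)
            exact mul_le_mul_of_nonneg_right habs2 (Real.rpow_nonneg hXpos.le _)
        _ = (ρ ^ ((1:ℝ) - 1/θ)) ^ (s + ε) * mm μ x (ρ ^ ((1:ℝ)/θ)) := by
            rw [Real.rpow_add hXpos]; ring_nf
    have hratio : ρ ^ ((1:ℝ) - 1/θ) = ρ / ρ ^ ((1:ℝ)/θ) := by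
      rw [ratio_eq hρpos, one_div]
    have ihR := ih x hx R hR hRle
    calc mm μ x R ≤ (R / ρ) ^ (s + ε) * mm μ x ρ := ihR
      _ ≤ (R / ρ) ^ (s + ε) * ((ρ ^ ((1:ℝ) - 1/θ)) ^ (s + ε) * mm μ x (R ^ ((1/θ) ^ (k+1)))) :=
          mul_le_mul_of_nonneg_left hstep2 (Real.rpow_nonneg (by positivity) _)
      _ = ((R / ρ) * (ρ / ρ ^ ((1:ℝ)/θ))) ^ (s + ε) * mm μ x (R ^ ((1/θ) ^ (k+1))) := by
          rw [hratio, ← mul_assoc, ← Real.mul_rpow (by positivity) (by positivity)]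
      _ = (R / R ^ ((1/θ) ^ (k+1))) ^ (s + ε) * mm μ x (R ^ ((1/θ) ^ (k+1))) := by
          rw [div_mul_div_cancel₀ hρpos.ne', hnext]

/-- Iterated application of the single-scale lower bound, with the constant absorbed. -/
lemma iterate_lower {θ : ℝ} (hθ : θ ∈ Set.Ioo (0:ℝ) 1) {s ε c R₀ R₁ : ℝ}
    (hc : 0 < c) (hε : 0 < ε) (hs0 : 0 ≤ s)
    (hb : ∀ x ∈ msupp μ, ∀ R : ℝ, 0 < R → R ≤ R₀ →
      c * (R ^ (1 - 1/θ)) ^ s * mm μ x (R ^ (1/θ)) ≤ mm μ x R)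
    (hR₁0 : 0 < R₁) (hR₁R₀ : R₁ ≤ R₀) (hR₁1 : R₁ ≤ 1)
    (habs : ∀ ρ : ℝ, 0 < ρ → ρ ≤ R₁ → ρ ^ ((1/θ - 1) * ε) ≤ c) :
    ∀ k : ℕ, ∀ x ∈ msupp μ, ∀ R : ℝ, 0 < R → R ≤ R₁ →
      (R / R ^ ((1/θ) ^ k)) ^ (s - ε) * mm μ x (R ^ ((1/θ) ^ k)) ≤ mm μ x R := by
  obtain ⟨hθ0, hθ1, hθinv, hθδ⟩ := theta_facts hθ
  intro k
  induction k with
  | zero =>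
    intro x hx R hR hRle
    rw [pow_zero, Real.rpow_one, div_self hR.ne', Real.one_rpow, one_mul]
  | succ k ih =>
    intro x hx R hR hRle
    set ρ : ℝ := R ^ ((1/θ) ^ k) with hρdef
    have hρpos : 0 < ρ := Real.rpow_pos_of_pos hR _
    have huk : (1:ℝ) ≤ (1/θ) ^ k := one_le_pow₀ hθinv.le
    have hρR : ρ ≤ R := by
      have := Real.rpow_le_rpow_of_exponent_ge hR (le_trans hRle hR₁1) huk
      rwa [Real.rpow_one] at this
    have hρR₁ : ρ ≤ R₁ := le_trans hρR hRle
    have hstep := hb x hx ρ hρpos (le_trans hρR₁ hR₁R₀)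
    have hnext : ρ ^ ((1:ℝ)/θ) = R ^ ((1/θ) ^ (k+1)) := by
      rw [hρdef, ← Real.rpow_mul hR.le, ← pow_succ]
    have hXpos : (0:ℝ) < ρ ^ ((1:ℝ) - 1/θ) := Real.rpow_pos_of_pos hρpos _
    have habs2 : (ρ ^ ((1:ℝ) - 1/θ)) ^ (-ε) ≤ c := by
      rw [← Real.rpow_mul hρpos.le]
      have he : ((1:ℝ) - 1/θ) * (-ε) = (1/θ - 1) * ε := by ring
      rw [he]
      exact habs ρ hρpos hρR₁
    have hratio' : ρ ^ ((1:ℝ) - 1/θ) = ρ / ρ ^ ((1:ℝ)/θ) := by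
      rw [ratio_eq hρpos, one_div]
    have hstep2 : (ρ ^ ((1:ℝ) - 1/θ)) ^ (s - ε) * mm μ x (R ^ ((1/θ) ^ (k+1))) ≤ mm μ x ρ := by
      rw [← hnext]
      calc (ρ ^ ((1:ℝ) - 1/θ)) ^ (s - ε) * mm μ x (ρ ^ ((1:ℝ)/θ))
          = (ρ ^ ((1:ℝ) - 1/θ)) ^ (-ε) * (ρ ^ ((1:ℝ) - 1/θ)) ^ s * mm μ x (ρ ^ ((1:ℝ)/θ)) := by
            rw [← Real.rpow_add hXpos]; ring_nf
        _ ≤ c * (ρ ^ ((1:ℝ) - 1/θ)) ^ s * mm μ x (ρ ^ ((1:ℝ)/θ)) := by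
            apply mul_le_mul_of_nonneg_right _ (mm_nonneg μ x _)
            exact mul_le_mul_of_nonneg_right habs2 (Real.rpow_nonneg hXpos.le _)
        _ ≤ mm μ x ρ := by
            have := hstep
            rwa [one_div] at this ⊢
    have ihR := ih x hx R hR hRle
    calc (R / R ^ ((1/θ) ^ (k+1))) ^ (s - ε) * mm μ x (R ^ ((1/θ) ^ (k+1)))
        = ((R / ρ) * (ρ / ρ ^ ((1:ℝ)/θ))) ^ (s - ε) * mm μ x (R ^ ((1/θ) ^ (k+1))) := by
          rw [div_mul_div_cancel₀ hρpos.ne', hnext]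
      _ = (R / ρ) ^ (s - ε) * ((ρ ^ ((1:ℝ) - 1/θ)) ^ (s - ε) * mm μ x (R ^ ((1/θ) ^ (k+1)))) := by
          rw [hratio', ← mul_assoc, ← Real.mul_rpow (by positivity) (by positivity)]
      _ ≤ (R / ρ) ^ (s - ε) * mm μ x ρ :=
          mul_le_mul_of_nonneg_left hstep2 (Real.rpow_nonneg (by positivity) _)
      _ ≤ mm μ x R := ihR

set_option maxHeartbeats 1000000 in
/-- Chaining: a member of the upper spectrum set gives a member of the quasi-Assouad set. -/
lemma chain_upper {D : ℝ} (hD : 0 ≤ D)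
    (hqA : ∀ δ : ℝ, 0 < δ → ∃ s ∈ upperHSet μ δ, s ≤ D)
    {θ : ℝ} (hθ : θ ∈ Set.Ioo (0:ℝ) 1) (hθhalf : 1/2 ≤ θ)
    {s δ ε : ℝ} (hs : s ∈ ESet μ θ) (hδ : 0 < δ) (hε : 0 < ε) :
    s + ε + 3 * (1 - θ) * D * ((1 + δ)/δ) ∈ upperHSet μ δ := by
  obtain ⟨hθ0, hθ1, hθinv, hθδ⟩ := theta_facts hθ
  obtain ⟨hs0, c, hc, R₀, hR₀, hb⟩ := hs
  obtain ⟨C, hC, ρ₀, hρ₀, hρ₀1, hstar⟩ := star μ hD hqA (by linarith : (0:ℝ) < 1 - θ)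
  set a : ℝ := (1/θ - 1) * ε with hadef
  have ha : 0 < a := by positivity
  set K : ℝ := (1/c) ^ (1/a) with hKdef
  have hK : 0 < K := Real.rpow_pos_of_pos (by positivity) _
  set R₁ : ℝ := min (min R₀ ρ₀) (min 1 K) with hR₁def
  have hR₁0 : 0 < R₁ := lt_min (lt_min hR₀ hρ₀) (lt_min one_pos hK)
  have hR₁1 : R₁ ≤ 1 := le_trans (min_le_right _ _) (min_le_left _ _)
  have habs : ∀ ρ : ℝ, 0 < ρ → ρ ≤ R₁ → c ≤ ρ ^ (-a) := by
    intro ρ hρ hρR₁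
    have hρK : ρ ≤ K := le_trans hρR₁ (le_trans (min_le_right _ _) (min_le_right _ _))
    have h1 : ρ ^ a ≤ K ^ a := Real.rpow_le_rpow hρ.le hρK ha.le
    have h2 : K ^ a = 1/c := by
      rw [hKdef, ← Real.rpow_mul (by positivity), one_div a, inv_mul_cancel₀ ha.ne',
        Real.rpow_one]
    rw [h2, one_div] at h1
    have h3 : (c⁻¹)⁻¹ ≤ (ρ ^ a)⁻¹ := inv_anti₀ (Real.rpow_pos_of_pos hρ _) h1
    rwa [inv_inv, ← Real.rpow_neg hρ.le] at h3
  have hiter := iterate_upper μ hθ hc hε hs0 hb hR₁0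
    (le_trans (min_le_left _ _) (min_le_left _ _)) hR₁1 habs
  set R₂ : ℝ := min R₁ 2⁻¹ with hR₂def
  have hR₂0 : 0 < R₂ := lt_min hR₁0 (by norm_num)
  have h1δ : (0:ℝ) < 1 + δ := by linarith
  refine ⟨?_, R₂ ^ (1 + δ), Real.rpow_pos_of_pos hR₂0 _, C, hC, ?_⟩
  · have h1 : 0 ≤ (1 - θ) * D := mul_nonneg (by linarith) hD
    have h2 : 0 < (1 + δ)/δ := by positivity
    nlinarith
  intro x hx r R hr hR hrRδ hRc₁
  have hR2 : R ≤ R₂ := (Real.rpow_le_rpow_iff hR.le hR₂0.le h1δ).1 hRc₁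
  have hR1 : R < 1 := lt_of_le_of_lt (le_trans hR2 (min_le_right _ _)) (by norm_num)
  have hRR₁ : R ≤ R₁ := le_trans hR2 (min_le_left _ _)
  have hrR : r ≤ R := by
    have h1 : R ^ (1 + δ) ≤ R ^ (1:ℝ) :=
      Real.rpow_le_rpow_of_exponent_ge hR hR1.le (by linarith)
    rw [Real.rpow_one] at h1
    exact le_trans hrRδ h1
  have hQ1 : 1 ≤ R / r := (one_le_div hr).2 hrR
  have hQ0 : (0:ℝ) < R / r := by positivity
  obtain ⟨k, hk1, hk2⟩ := scale_select hr hR hR1 hδ hrRδ hθinv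
  set ρ : ℝ := R ^ ((1/θ) ^ k) with hρdef
  have hρpos : 0 < ρ := Real.rpow_pos_of_pos hR _
  have hρ' : R ^ ((1/θ) ^ (k+1)) = ρ ^ ((1:ℝ)/θ) := by
    rw [hρdef, ← Real.rpow_mul hR.le, ← pow_succ]
  rw [hρ'] at hk2
  have hρR : ρ ≤ R := by
    have := Real.rpow_le_rpow_of_exponent_ge hR hR1.le (one_le_pow₀ hθinv.le (n := k))
    rwa [Real.rpow_one] at this
  have hit := hiter k x hx R hR hRR₁
  rw [← hρdef] at hit
  have hst := hstar x hx r ρ hr hk1 (le_trans hρR (le_trans hRR₁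
    (le_trans (min_le_left _ _) (min_le_right _ _))))
  -- three factor bounds
  have hb1 : (R / ρ) ^ (s + ε) ≤ (R / r) ^ (s + ε) := by
    apply Real.rpow_le_rpow (by positivity) _ (by linarith)
    gcongr
  have hb2 : ρ ^ (-((1 - θ) * D)) ≤ (R / r) ^ ((1 - θ) * D * ((1 + δ)/δ)) := by
    have h1 : ρ ^ (-((1 - θ) * D)) ≤ r ^ (-((1 - θ) * D)) :=
      Real.rpow_le_rpow_of_nonpos hr hk1
        (neg_nonpos.2 (mul_nonneg (by linarith : (0:ℝ) ≤ 1 - θ) hD))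
    exact le_trans h1
      (rpow_neg_scale_bound hr hR hδ (mul_nonneg (by linarith : (0:ℝ) ≤ 1 - θ) hD) hrRδ)
  have hb3 : (ρ / r) ^ D ≤ (R / r) ^ ((1/θ - 1) * D * ((1 + δ)/δ)) := by
    have h1a : ρ / r ≤ ρ / ρ ^ ((1:ℝ)/θ) := by
      rw [div_le_div_iff₀ hr (Real.rpow_pos_of_pos hρpos _)]
      exact mul_le_mul_of_nonneg_left hk2.le hρpos.le
    have h1 : ρ / r ≤ ρ ^ ((1:ℝ) - 1/θ) := by
      rw [← ratio_eq hρpos]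
      exact h1a
    have h2 : (ρ / r) ^ D ≤ (ρ ^ ((1:ℝ) - 1/θ)) ^ D :=
      Real.rpow_le_rpow (by positivity) h1 hD
    have h3 : (ρ ^ ((1:ℝ) - 1/θ)) ^ D = ρ ^ (-((1/θ - 1) * D)) := by
      rw [← Real.rpow_mul hρpos.le]
      ring_nf
    have h4 : ρ ^ (-((1/θ - 1) * D)) ≤ r ^ (-((1/θ - 1) * D)) :=
      Real.rpow_le_rpow_of_nonpos hr hk1 (neg_nonpos.2 (mul_nonneg hθδ.le hD))
    have h5 := rpow_neg_scale_bound hr hR hδ (mul_nonneg hθδ.le hD) hrRδ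
    rw [h3] at h2
    exact le_trans h2 (le_trans h4 h5)
  have key : mm μ x R ≤ C * (R / r) ^ ((s + ε) + ((1 - θ) * D * ((1 + δ)/δ))
      + ((1/θ - 1) * D * ((1 + δ)/δ))) * mm μ x r := by
    calc mm μ x R ≤ (R / ρ) ^ (s + ε) * mm μ x ρ := hit
      _ ≤ (R / ρ) ^ (s + ε) * (C * ρ ^ (-((1 - θ) * D)) * (ρ / r) ^ D * mm μ x r) :=
          mul_le_mul_of_nonneg_left hst (Real.rpow_nonneg (by positivity) _)
      _ ≤ (R / r) ^ (s + ε) * (C * (R / r) ^ ((1 - θ) * D * ((1 + δ)/δ))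
            * (R / r) ^ ((1/θ - 1) * D * ((1 + δ)/δ)) * mm μ x r) := by
          apply mul_le_mul hb1 _ _ (Real.rpow_nonneg (by positivity) _)
          · apply mul_le_mul _ le_rfl (mm_nonneg μ x _)
              (mul_nonneg (mul_nonneg hC.le (Real.rpow_nonneg hQ0.le _))
                (Real.rpow_nonneg hQ0.le _))
            apply mul_le_mul _ hb3 (Real.rpow_nonneg (by positivity) _)
              (mul_nonneg hC.le (Real.rpow_nonneg hQ0.le _))
            exact mul_le_mul_of_nonneg_left hb2 hC.le
          · have h9 : (0:ℝ) ≤ ρ ^ (-((1 - θ) * D)) := Real.rpow_nonneg hρpos.le _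
            have h10 : (0:ℝ) ≤ (ρ / r) ^ D := Real.rpow_nonneg (by positivity) _
            have h11 : (0:ℝ) ≤ mm μ x r := mm_nonneg μ x r
            positivity
      _ = C * (R / r) ^ ((s + ε) + ((1 - θ) * D * ((1 + δ)/δ))
            + ((1/θ - 1) * D * ((1 + δ)/δ))) * mm μ x r := by
          rw [Real.rpow_add hQ0 ((s + ε) + ((1 - θ) * D * ((1 + δ)/δ)))
              ((1/θ - 1) * D * ((1 + δ)/δ)),
            Real.rpow_add hQ0 (s + ε) ((1 - θ) * D * ((1 + δ)/δ))]
          ring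
  have hexp : (s + ε) + ((1 - θ) * D * ((1 + δ)/δ)) + ((1/θ - 1) * D * ((1 + δ)/δ))
      ≤ s + ε + 3 * (1 - θ) * D * ((1 + δ)/δ) := by
    have h2θ : 1/θ - 1 ≤ 2 * (1 - θ) := by
      rw [div_sub' hθ0.ne', div_le_iff₀ hθ0]
      nlinarith
    have h1 : (1/θ - 1) * D * ((1 + δ)/δ) ≤ 2 * (1 - θ) * D * ((1 + δ)/δ) := by
      apply mul_le_mul_of_nonneg_right _ (by positivity)
      exact mul_le_mul_of_nonneg_right h2θ hD
    nlinarith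
  calc (μ (ball x R)).toReal ≤ C * (R / r) ^ ((s + ε) + ((1 - θ) * D * ((1 + δ)/δ))
      + ((1/θ - 1) * D * ((1 + δ)/δ))) * mm μ x r := key
    _ ≤ C * (R / r) ^ (s + ε + 3 * (1 - θ) * D * ((1 + δ)/δ)) * mm μ x r := by
        apply mul_le_mul_of_nonneg_right _ (mm_nonneg μ x _)
        exact mul_le_mul_of_nonneg_left
          (Real.rpow_le_rpow_of_exponent_le hQ1 hexp) hC.le

set_option maxHeartbeats 1000000 in
/-- Chaining: a member of the lower spectrum set gives a member of the quasi-lower set. -/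
lemma chain_lower {θ : ℝ} (hθ : θ ∈ Set.Ioo (0:ℝ) 1)
    {s δ ε w : ℝ} (hs : s ∈ LSet μ θ) (hδ : 0 < δ) (hε : 0 < ε)
    (hw : w = s - ε - (1/θ - 1) * s * ((1 + δ)/δ)) (hw0 : 0 ≤ w) :
    w ∈ lowerHSet μ δ := by
  obtain ⟨hθ0, hθ1, hθinv, hθδ⟩ := theta_facts hθ
  obtain ⟨hs0, c, hc, R₀, hR₀, hb⟩ := hs
  set a : ℝ := (1/θ - 1) * ε with hadef
  have ha : 0 < a := by positivity
  set K : ℝ := c ^ (1/a) with hKdef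
  have hK : 0 < K := Real.rpow_pos_of_pos hc _
  set R₁ : ℝ := min R₀ (min 1 K) with hR₁def
  have hR₁0 : 0 < R₁ := lt_min hR₀ (lt_min one_pos hK)
  have hR₁1 : R₁ ≤ 1 := le_trans (min_le_right _ _) (min_le_left _ _)
  have habs : ∀ ρ : ℝ, 0 < ρ → ρ ≤ R₁ → ρ ^ a ≤ c := by
    intro ρ hρ hρR₁
    have hρK : ρ ≤ K := le_trans hρR₁ (le_trans (min_le_right _ _) (min_le_right _ _))
    have h1 : ρ ^ a ≤ K ^ a := Real.rpow_le_rpow hρ.le hρK ha.le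
    have h2 : K ^ a = c := by
      rw [hKdef, ← Real.rpow_mul hc.le, one_div a, inv_mul_cancel₀ ha.ne', Real.rpow_one]
    rwa [h2] at h1
  have habs' : ∀ ρ : ℝ, 0 < ρ → ρ ≤ R₁ → ρ ^ ((1/θ - 1) * ε) ≤ c := habs
  have hiter := iterate_lower μ hθ hc hε hs0 hb hR₁0 (min_le_left _ _) hR₁1 habs'
  set R₂ : ℝ := min R₁ 2⁻¹ with hR₂def
  have hR₂0 : 0 < R₂ := lt_min hR₁0 (by norm_num)
  have h1δ : (0:ℝ) < 1 + δ := by linarith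
  have hsε : 0 ≤ s - ε := by
    have h1 : 0 ≤ (1/θ - 1) * s * ((1 + δ)/δ) := by positivity
    linarith [hw0, hw.ge]
  refine ⟨hw0, R₂ ^ (1 + δ), Real.rpow_pos_of_pos hR₂0 _, 1, one_pos, ?_⟩
  intro x hx r R hr hR hrRδ hRc₁
  have hR2 : R ≤ R₂ := (Real.rpow_le_rpow_iff hR.le hR₂0.le h1δ).1 hRc₁
  have hR1 : R < 1 := lt_of_le_of_lt (le_trans hR2 (min_le_right _ _)) (by norm_num)
  have hRR₁ : R ≤ R₁ := le_trans hR2 (min_le_left _ _)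
  have hrR : r ≤ R := by
    have h1 : R ^ (1 + δ) ≤ R ^ (1:ℝ) :=
      Real.rpow_le_rpow_of_exponent_ge hR hR1.le (by linarith)
    rw [Real.rpow_one] at h1
    exact le_trans hrRδ h1
  have hQ1 : 1 ≤ R / r := (one_le_div hr).2 hrR
  have hQ0 : (0:ℝ) < R / r := by positivity
  obtain ⟨k, hk1, hk2⟩ := scale_select hr hR hR1 hδ hrRδ hθinv
  set ρ : ℝ := R ^ ((1/θ) ^ k) with hρdef
  have hρpos : 0 < ρ := Real.rpow_pos_of_pos hR _
  have hρ' : R ^ ((1/θ) ^ (k+1)) = ρ ^ ((1:ℝ)/θ) := by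
    rw [hρdef, ← Real.rpow_mul hR.le, ← pow_succ]
  rw [hρ'] at hk2
  have hit := hiter k x hx R hR hRR₁
  rw [← hρdef] at hit
  -- lower bound for (R/ρ)^(s-ε)
  have hbnd : (R / r) ^ w ≤ (R / ρ) ^ (s - ε) := by
    have e1 : (R / ρ) ^ (s - ε) = (R / r) ^ (s - ε) * (r / ρ) ^ (s - ε) := by
      rw [← Real.mul_rpow (by positivity) (by positivity), div_mul_div_cancel₀ hr.ne']
    have h1 : (ρ ^ ((1:ℝ)/θ)) / ρ ≤ r / ρ := by gcongr
    have h2 : (ρ ^ ((1:ℝ)/θ)) / ρ = ρ ^ ((1:ℝ)/θ - 1) := by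
      rw [Real.rpow_sub hρpos, Real.rpow_one]
    have h3 : (ρ ^ ((1:ℝ)/θ - 1)) ^ (s - ε) ≤ (r / ρ) ^ (s - ε) := by
      apply Real.rpow_le_rpow (Real.rpow_nonneg hρpos.le _) _ hsε
      rw [← h2]; exact h1
    have h4 : (ρ ^ ((1:ℝ)/θ - 1)) ^ (s - ε) = ρ ^ ((1/θ - 1) * (s - ε)) := by
      rw [← Real.rpow_mul hρpos.le, one_div]
    have h5 : r ^ ((1/θ - 1) * (s - ε)) ≤ ρ ^ ((1/θ - 1) * (s - ε)) :=
      Real.rpow_le_rpow hr.le hk1 (by positivity)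
    have h6 : (R / r) ^ (-(((1/θ - 1) * (s - ε)) * ((1 + δ)/δ))) ≤ r ^ ((1/θ - 1) * (s - ε)) :=
      rpow_pos_scale_bound hr hR hδ (by positivity) hrRδ
    have h7 : (R / r) ^ (-(((1/θ - 1) * (s - ε)) * ((1 + δ)/δ))) ≤ (r / ρ) ^ (s - ε) := by
      rw [h4] at h3
      exact le_trans h6 (le_trans h5 h3)
    have h8 : (R / r) ^ w ≤ (R / r) ^ ((s - ε) + (-(((1/θ - 1) * (s - ε)) * ((1 + δ)/δ)))) := by
      apply Real.rpow_le_rpow_of_exponent_le hQ1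
      have h9 : (1/θ - 1) * (s - ε) * ((1 + δ)/δ) ≤ (1/θ - 1) * s * ((1 + δ)/δ) := by
        apply mul_le_mul_of_nonneg_right _ (by positivity)
        nlinarith
      rw [hw]; linarith
    rw [e1]
    calc (R / r) ^ w ≤ (R / r) ^ ((s - ε) + (-(((1/θ - 1) * (s - ε)) * ((1 + δ)/δ)))) := h8
      _ = (R / r) ^ (s - ε) * (R / r) ^ (-(((1/θ - 1) * (s - ε)) * ((1 + δ)/δ))) :=
          Real.rpow_add hQ0 _ _
      _ ≤ (R / r) ^ (s - ε) * (r / ρ) ^ (s - ε) :=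
          mul_le_mul_of_nonneg_left h7 (Real.rpow_nonneg hQ0.le _)
  have hmono : mm μ x r ≤ mm μ x ρ := mm_mono μ x hk1
  calc (1:ℝ) * (R / r) ^ w * (μ (ball x r)).toReal = (R / r) ^ w * mm μ x r := by
        rw [one_mul]; rfl
    _ ≤ (R / ρ) ^ (s - ε) * mm μ x ρ := by
        apply mul_le_mul hbnd hmono (mm_nonneg μ x _) (Real.rpow_nonneg (by positivity) _)
    _ ≤ mm μ x R := hit

/-! ### Set-level facts -/

lemma bddBelow_ESet (θ : ℝ) : BddBelow (ESet μ θ) := ⟨0, fun _ hs => hs.1⟩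

lemma bddBelow_upperHSet (δ : ℝ) : BddBelow (upperHSet μ δ) := ⟨0, fun _ hs => hs.1⟩

/-- `upperEq` is at most the quasi-Assouad value at the corresponding `δ`. -/
lemma upperEq_le_qA {θ : ℝ} (hθ : θ ∈ Set.Ioo (0:ℝ) 1)
    (hne' : (upperHSet μ (1/θ - 1)).Nonempty) :
    upperEq μ θ ≤ sInf (upperHSet μ (1/θ - 1)) := by
  rw [upperEq_def]
  exact le_csInf hne' fun b hb => csInf_le (bddBelow_ESet μ θ) (mem_ESet_of_mem_upperHSet μ hθ hb)

/-- The quasi-lower value is at most `lowerEq` at the corresponding `θ`. -/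
lemma qL_le_lowerEq {θ : ℝ} (hθ : θ ∈ Set.Ioo (0:ℝ) 1)
    (hbdd : BddAbove (LSet μ θ)) :
    sSup (lowerHSet μ (1/θ - 1)) ≤ lowerEq μ θ := by
  rw [lowerEq_def]
  have hδ : 0 < 1/θ - 1 := (theta_facts hθ).2.2.2
  exact csSup_le ⟨0, zero_mem_lowerHSet μ hδ⟩
    fun b hb => le_csSup hbdd (mem_LSet_of_mem_lowerHSet μ hθ hb)

/-- Key upper estimate: `sInf (upperHSet μ δ) ≤ upperEq μ θ + 3(1-θ)D(1+δ)/δ`. -/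
lemma qA_le_upperEq_add {D : ℝ} (hD : 0 ≤ D)
    (hqA : ∀ δ : ℝ, 0 < δ → ∃ s ∈ upperHSet μ δ, s ≤ D)
    {θ : ℝ} (hθ : θ ∈ Set.Ioo (0:ℝ) 1) (hθhalf : 1/2 ≤ θ) {δ : ℝ} (hδ : 0 < δ)
    (hEne : (ESet μ θ).Nonempty) :
    sInf (upperHSet μ δ) ≤ upperEq μ θ + 3 * (1 - θ) * D * ((1 + δ)/δ) := by
  apply le_of_forall_pos_le_add
  intro η hη
  obtain ⟨s, hs, hslt⟩ := exists_lt_of_csInf_lt hEne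
    (lt_add_of_pos_right (sInf (ESet μ θ)) (half_pos hη))
  have hmem := chain_upper μ hD hqA hθ hθhalf hs hδ (half_pos hη)
  have h1 : sInf (upperHSet μ δ) ≤ s + η/2 + 3 * (1 - θ) * D * ((1 + δ)/δ) :=
    csInf_le (bddBelow_upperHSet μ δ) hmem
  rw [upperEq_def]
  linarith [hslt]

/-- Key lower estimate: `lowerEq μ θ ≤ sSup (lowerHSet μ δ) + (1/θ-1)D(1+δ)/δ`. -/
lemma lowerEq_le_qL_add {D : ℝ} (hD : 0 ≤ D)
    {θ : ℝ} (hθ : θ ∈ Set.Ioo (0:ℝ) 1) {δ : ℝ} (hδ : 0 < δ)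
    (hLbdd : BddAbove (LSet μ θ)) (hLD : ∀ s ∈ LSet μ θ, s ≤ D)
    (hHbdd : BddAbove (lowerHSet μ δ)) (hH0 : 0 ≤ sSup (lowerHSet μ δ)) :
    lowerEq μ θ ≤ sSup (lowerHSet μ δ) + (1/θ - 1) * D * ((1 + δ)/δ) := by
  obtain ⟨hθ0, hθ1, hθinv, hθδ⟩ := theta_facts hθ
  apply le_of_forall_pos_le_add
  intro η hη
  have hLne : (LSet μ θ).Nonempty := ⟨0, zero_mem_LSet μ hθ⟩
  rw [lowerEq_def]
  obtain ⟨s, hs, hslt⟩ := exists_lt_of_lt_csSup hLne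
    (sub_lt_self (sSup (LSet μ θ)) (half_pos hη))
  have hsD : s ≤ D := hLD s hs
  obtain ⟨w, hwdef⟩ : ∃ w : ℝ, w = s - η/2 - (1/θ - 1) * s * ((1 + δ)/δ) := ⟨_, rfl⟩
  rcases le_or_gt 0 w with hw0 | hw0
  · have hmem := chain_lower μ hθ hs hδ (half_pos hη) hwdef hw0
    have h1 : w ≤ sSup (lowerHSet μ δ) := le_csSup hHbdd hmem
    have h2 : (1/θ - 1) * s * ((1 + δ)/δ) ≤ (1/θ - 1) * D * ((1 + δ)/δ) := by
      apply mul_le_mul_of_nonneg_right _ (by positivity)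
      exact mul_le_mul_of_nonneg_left hsD hθδ.le
    apply le_of_lt
    calc sSup (LSet μ θ) < s + η/2 := by linarith [hslt]
      _ = w + η + (1/θ - 1) * s * ((1 + δ)/δ) := by rw [hwdef]; ring
      _ ≤ sSup (lowerHSet μ δ) + (1/θ - 1) * D * ((1 + δ)/δ) + η := by linarith [h1, h2]
  · have h2 : (1/θ - 1) * s * ((1 + δ)/δ) ≤ (1/θ - 1) * D * ((1 + δ)/δ) := by
      apply mul_le_mul_of_nonneg_right _ (by positivity)
      exact mul_le_mul_of_nonneg_left hsD hθδ.le
    have h3 : s < η/2 + (1/θ - 1) * s * ((1 + δ)/δ) := by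
      have h5 : w < 0 := hw0
      rw [hwdef] at h5; linarith
    apply le_of_lt
    calc sSup (LSet μ θ) < s + η/2 := by linarith [hslt]
      _ < η + (1/θ - 1) * s * ((1 + δ)/δ) := by linarith [h3]
      _ ≤ sSup (lowerHSet μ δ) + (1/θ - 1) * D * ((1 + δ)/δ) + η := by linarith [h2, hH0]

/-! ### Empty support case -/

lemma not_bddAbove_Ici' : ¬ BddAbove {s : ℝ | 0 ≤ s} := by
  rintro ⟨b, hb⟩
  have h1 : max b 0 + 1 ∈ {s : ℝ | 0 ≤ s} := by
    simp only [Set.mem_setOf_eq]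
    have := le_max_right b (0:ℝ)
    linarith
  have h2 := hb h1
  have := le_max_left b (0:ℝ)
  linarith

lemma ESet_empty_supp (h : msupp μ = ∅) (θ : ℝ) : ESet μ θ = {s : ℝ | 0 ≤ s} := by
  ext s
  constructor
  · exact fun hs => hs.1
  · intro hs
    exact ⟨hs, 1, one_pos, 1, one_pos, fun x hx => by rw [h] at hx; exact absurd hx (Set.notMem_empty x)⟩

lemma LSet_empty_supp (h : msupp μ = ∅) (θ : ℝ) : LSet μ θ = {s : ℝ | 0 ≤ s} := by
  ext s
  constructor
  · exact fun hs => hs.1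
  · intro hs
    exact ⟨hs, 1, one_pos, 1, one_pos, fun x hx => by rw [h] at hx; exact absurd hx (Set.notMem_empty x)⟩

lemma upperHSet_empty_supp (h : msupp μ = ∅) (δ : ℝ) : upperHSet μ δ = {s : ℝ | 0 ≤ s} := by
  ext s
  constructor
  · exact fun hs => hs.1
  · intro hs
    exact ⟨hs, 1, one_pos, 1, one_pos, fun x hx => by rw [h] at hx; exact absurd hx (Set.notMem_empty x)⟩

lemma lowerHSet_empty_supp (h : msupp μ = ∅) (δ : ℝ) : lowerHSet μ δ = {s : ℝ | 0 ≤ s} := by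
  ext s
  constructor
  · exact fun hs => hs.1
  · intro hs
    exact ⟨hs, 1, one_pos, 1, one_pos, fun x hx => by rw [h] at hx; exact absurd hx (Set.notMem_empty x)⟩

lemma sInf_nonneg_set : sInf {s : ℝ | 0 ≤ s} = 0 := by
  have : {s : ℝ | 0 ≤ s} = Set.Ici (0:ℝ) := rfl
  rw [this, csInf_Ici]

lemma sSup_nonneg_set : sSup {s : ℝ | 0 ≤ s} = 0 :=
  Real.sSup_of_not_bddAbove not_bddAbove_Ici'

/-! ### The normalized spectrum functions and their Lipschitz property -/

lemma one_div_sub_pos {θ θ' : ℝ} (hθ0 : 0 < θ) (hlt : θ < θ') : 0 < 1/θ - 1/θ' := by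
  rw [sub_pos]
  exact one_div_lt_one_div_of_lt hθ0 hlt

lemma psiA_anti {D : ℝ} (hD : 0 ≤ D)
    (hqA : ∀ δ : ℝ, 0 < δ → ∃ s ∈ upperHSet μ δ, s ≤ D)
    {θ θ' : ℝ} (hθ : θ ∈ Set.Ioo (0:ℝ) 1) (hθ' : θ' ∈ Set.Ioo (0:ℝ) 1) (hlt : θ < θ') :
    (1/θ' - 1) * upperEq μ θ' ≤ (1/θ - 1) * upperEq μ θ := by
  obtain ⟨hθ0, hθ1, hθinv, hθδ⟩ := theta_facts hθ
  obtain ⟨hθ'0, hθ'1, hθ'inv, hθ'δ⟩ := theta_facts hθ'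
  apply le_of_forall_pos_le_add
  intro η hη
  obtain ⟨s₀, hs₀, _⟩ := hqA (1/θ - 1) hθδ
  have hEne : (ESet μ θ).Nonempty := ⟨s₀, mem_ESet_of_mem_upperHSet μ hθ hs₀⟩
  have hη' : 0 < η / (1/θ - 1) := by positivity
  obtain ⟨s, hs, hslt⟩ := exists_lt_of_csInf_lt hEne
    (lt_add_of_pos_right (sInf (ESet μ θ)) hη')
  set s' : ℝ := (1/θ - 1) * s / (1/θ' - 1) with hs'def
  have hs'0 : 0 ≤ s' := by
    have := hs.1
    positivity
  have hne1 : (1/θ - 1) ≠ 0 := hθδ.ne'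
  have hne2 : (1/θ' - 1) ≠ 0 := hθ'δ.ne'
  have hz1 : θ ≠ 0 := hθ0.ne'
  have hz2 : θ' ≠ 0 := hθ'0.ne'
  have hz3 : (1 - θ) ≠ 0 := by intro h; rw [sub_eq_zero] at h; exact absurd h.symm hθ1.ne
  have hz4 : (1 - θ') ≠ 0 := by intro h; rw [sub_eq_zero] at h; exact absurd h.symm hθ'1.ne
  have h2 : (1/θ' - 1) * s' = (1/θ - 1) * s := by
    rw [hs'def]; field_simp <;> ring
  have hmem := mem_ESet_up μ hθ hθ' hlt hs hs'0 h2.ge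
  have hle : upperEq μ θ' ≤ s' := csInf_le (bddBelow_ESet μ θ') hmem
  have h1 : (1/θ' - 1) * upperEq μ θ' ≤ (1/θ' - 1) * s' :=
    mul_le_mul_of_nonneg_left hle hθ'δ.le
  have h3 : (1/θ - 1) * s ≤ (1/θ - 1) * (upperEq μ θ + η / (1/θ - 1)) :=
    mul_le_mul_of_nonneg_left (by rw [upperEq_def]; exact hslt.le) hθδ.le
  have h4 : (1/θ - 1) * (upperEq μ θ + η / (1/θ - 1)) = (1/θ - 1) * upperEq μ θ + η := by
    field_simp <;> ring
  linarith [h1, h2.le, h3, h4.le]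

lemma psiA_lip {D : ℝ} (hD : 0 ≤ D)
    (hqA : ∀ δ : ℝ, 0 < δ → ∃ s ∈ upperHSet μ δ, s ≤ D)
    {θ θ' : ℝ} (hθ : θ ∈ Set.Ioo (0:ℝ) 1) (hθ' : θ' ∈ Set.Ioo (0:ℝ) 1) (hlt : θ < θ') :
    (1/θ - 1) * upperEq μ θ ≤ (1/θ' - 1) * upperEq μ θ' + D * (1/θ - 1/θ') := by
  obtain ⟨hθ0, hθ1, hθinv, hθδ⟩ := theta_facts hθ
  obtain ⟨hθ'0, hθ'1, hθ'inv, hθ'δ⟩ := theta_facts hθ'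
  have hdd : 0 < 1/θ - 1/θ' := one_div_sub_pos hθ0 hlt
  apply le_of_forall_pos_le_add
  intro η hη
  obtain ⟨s₀, hs₀, _⟩ := hqA (1/θ' - 1) hθ'δ
  have hEne : (ESet μ θ').Nonempty := ⟨s₀, mem_ESet_of_mem_upperHSet μ hθ' hs₀⟩
  have hη' : 0 < (η/2) / (1/θ' - 1) := by positivity
  obtain ⟨s, hs, hslt⟩ := exists_lt_of_csInf_lt hEne
    (lt_add_of_pos_right (sInf (ESet μ θ')) hη')
  set s' : ℝ := ((1/θ' - 1) * s + (1/θ - 1/θ') * D + η/2) / (1/θ - 1) with hs'def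
  have hs'0 : 0 ≤ s' := by
    have h0 := hs.1
    have h1 : 0 ≤ (1/θ' - 1) * s := mul_nonneg hθ'δ.le h0
    have h2 : 0 ≤ (1/θ - 1/θ') * D := mul_nonneg hdd.le hD
    positivity
  have hne1 : (1/θ - 1) ≠ 0 := hθδ.ne'
  have hne2 : (1/θ' - 1) ≠ 0 := hθ'δ.ne'
  have hz1 : θ ≠ 0 := hθ0.ne'
  have hz2 : θ' ≠ 0 := hθ'0.ne'
  have hz3 : (1 - θ) ≠ 0 := by intro h; rw [sub_eq_zero] at h; exact absurd h.symm hθ1.ne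
  have hz4 : (1 - θ') ≠ 0 := by intro h; rw [sub_eq_zero] at h; exact absurd h.symm hθ'1.ne
  have h2 : (1/θ - 1) * s' = (1/θ' - 1) * s + (1/θ - 1/θ') * D + η/2 := by
    rw [hs'def]; field_simp <;> ring <;> ring
  have hmem := mem_ESet_down μ hD hqA hθ' hθ hlt hs hs'0 (half_pos hη) h2.ge
  have hle : upperEq μ θ ≤ s' := csInf_le (bddBelow_ESet μ θ) hmem
  have h1 : (1/θ - 1) * upperEq μ θ ≤ (1/θ - 1) * s' :=
    mul_le_mul_of_nonneg_left hle hθδ.le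
  have h3 : (1/θ' - 1) * s ≤ (1/θ' - 1) * (upperEq μ θ' + (η/2) / (1/θ' - 1)) :=
    mul_le_mul_of_nonneg_left (by rw [upperEq_def]; exact hslt.le) hθ'δ.le
  have h4 : (1/θ' - 1) * (upperEq μ θ' + (η/2) / (1/θ' - 1))
      = (1/θ' - 1) * upperEq μ θ' + η/2 := by
    field_simp <;> ring
  linarith [h1, h2.le, h3, h4.le]

lemma psiB_anti {D : ℝ} (hD : 0 ≤ D)
    (hqA : ∀ δ : ℝ, 0 < δ → ∃ s ∈ upperHSet μ δ, s ≤ D) (hne : (msupp μ).Nonempty)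
    {θ θ' : ℝ} (hθ : θ ∈ Set.Ioo (0:ℝ) 1) (hθ' : θ' ∈ Set.Ioo (0:ℝ) 1) (hlt : θ < θ') :
    (1/θ' - 1) * lowerEq μ θ' ≤ (1/θ - 1) * lowerEq μ θ := by
  obtain ⟨hθ0, hθ1, hθinv, hθδ⟩ := theta_facts hθ
  obtain ⟨hθ'0, hθ'1, hθ'inv, hθ'δ⟩ := theta_facts hθ'
  obtain ⟨sθ, hsθ, _⟩ := hqA (1/θ - 1) hθδ
  obtain ⟨sθ', hsθ', _⟩ := hqA (1/θ' - 1) hθ'δ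
  have hbddθ : BddAbove (LSet μ θ) :=
    ⟨_, fun b hb => LSet_le_ESet μ hθ hne hb (mem_ESet_of_mem_upperHSet μ hθ hsθ)⟩
  have hbddθ' : BddAbove (LSet μ θ') :=
    ⟨_, fun b hb => LSet_le_ESet μ hθ' hne hb (mem_ESet_of_mem_upperHSet μ hθ' hsθ')⟩
  apply le_of_forall_pos_le_add
  intro η hη
  have hη' : 0 < (η) / (1/θ' - 1) := by positivity
  have hLne' : (LSet μ θ').Nonempty := ⟨0, zero_mem_LSet μ hθ'⟩
  obtain ⟨s, hs, hslt⟩ := exists_lt_of_lt_csSup hLne'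
    (sub_lt_self (sSup (LSet μ θ')) hη')
  set s' : ℝ := (1/θ' - 1) * s / (1/θ - 1) with hs'def
  have hs'0 : 0 ≤ s' := by
    have := hs.1
    positivity
  have hne1 : (1/θ - 1) ≠ 0 := hθδ.ne'
  have hne2 : (1/θ' - 1) ≠ 0 := hθ'δ.ne'
  have hz1 : θ ≠ 0 := hθ0.ne'
  have hz2 : θ' ≠ 0 := hθ'0.ne'
  have hz3 : (1 - θ) ≠ 0 := by intro h; rw [sub_eq_zero] at h; exact absurd h.symm hθ1.ne
  have hz4 : (1 - θ') ≠ 0 := by intro h; rw [sub_eq_zero] at h; exact absurd h.symm hθ'1.ne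
  have h2 : (1/θ - 1) * s' = (1/θ' - 1) * s := by
    rw [hs'def]; field_simp <;> ring
  have hmem := mem_LSet_down μ hθ' hθ hlt hs hs'0 h2.le
  have hle : s' ≤ lowerEq μ θ := le_csSup hbddθ hmem
  have h1 : (1/θ - 1) * s' ≤ (1/θ - 1) * lowerEq μ θ :=
    mul_le_mul_of_nonneg_left hle hθδ.le
  have h3 : (1/θ' - 1) * (lowerEq μ θ' - η / (1/θ' - 1)) ≤ (1/θ' - 1) * s :=
    mul_le_mul_of_nonneg_left (by rw [lowerEq_def]; exact hslt.le) hθ'δ.le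
  have h4 : (1/θ' - 1) * (lowerEq μ θ' - η / (1/θ' - 1))
      = (1/θ' - 1) * lowerEq μ θ' - η := by
    field_simp <;> ring
  linarith [h1, h2.le, h3, h4.le]

lemma psiB_lip {D : ℝ} (hD : 0 ≤ D)
    (hqA : ∀ δ : ℝ, 0 < δ → ∃ s ∈ upperHSet μ δ, s ≤ D) (hne : (msupp μ).Nonempty)
    {θ θ' : ℝ} (hθ : θ ∈ Set.Ioo (0:ℝ) 1) (hθ' : θ' ∈ Set.Ioo (0:ℝ) 1) (hlt : θ < θ') :
    (1/θ - 1) * lowerEq μ θ ≤ (1/θ' - 1) * lowerEq μ θ' + D * (1/θ - 1/θ') := by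
  obtain ⟨hθ0, hθ1, hθinv, hθδ⟩ := theta_facts hθ
  obtain ⟨hθ'0, hθ'1, hθ'inv, hθ'δ⟩ := theta_facts hθ'
  have hdd : 0 < 1/θ - 1/θ' := one_div_sub_pos hθ0 hlt
  obtain ⟨sθ, hsθ, _⟩ := hqA (1/θ - 1) hθδ
  obtain ⟨sθ', hsθ', _⟩ := hqA (1/θ' - 1) hθ'δ
  have hbddθ : BddAbove (LSet μ θ) :=
    ⟨_, fun b hb => LSet_le_ESet μ hθ hne hb (mem_ESet_of_mem_upperHSet μ hθ hsθ)⟩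
  have hbddθ' : BddAbove (LSet μ θ') :=
    ⟨_, fun b hb => LSet_le_ESet μ hθ' hne hb (mem_ESet_of_mem_upperHSet μ hθ' hsθ')⟩
  have hB'0 : 0 ≤ lowerEq μ θ' := by
    rw [lowerEq_def]
    exact le_csSup hbddθ' (zero_mem_LSet μ hθ')
  apply le_of_forall_pos_le_add
  intro η hη
  have hη' : 0 < (η/3) / (1/θ - 1) := by positivity
  have hLne : (LSet μ θ).Nonempty := ⟨0, zero_mem_LSet μ hθ⟩
  obtain ⟨s, hs, hslt⟩ := exists_lt_of_lt_csSup hLne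
    (sub_lt_self (sSup (LSet μ θ)) hη')
  have hBle : lowerEq μ θ < s + (η/3) / (1/θ - 1) := by
    rw [lowerEq_def]; linarith [hslt]
  have hne1 : (1/θ - 1) ≠ 0 := hθδ.ne'
  have hne2 : (1/θ' - 1) ≠ 0 := hθ'δ.ne'
  have hz1 : θ ≠ 0 := hθ0.ne'
  have hz2 : θ' ≠ 0 := hθ'0.ne'
  have hz3 : (1 - θ) ≠ 0 := by intro h; rw [sub_eq_zero] at h; exact absurd h.symm hθ1.ne
  have hz4 : (1 - θ') ≠ 0 := by intro h; rw [sub_eq_zero] at h; exact absurd h.symm hθ'1.ne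
  have hmul : (1/θ - 1) * ((η/3) / (1/θ - 1)) = η/3 := by
    field_simp <;> ring
  rcases le_or_gt 0 ((1/θ - 1) * s - (1/θ - 1/θ') * D - η/3) with hc | hc
  · set s' : ℝ := ((1/θ - 1) * s - (1/θ - 1/θ') * D - η/3) / (1/θ' - 1) with hs'def
    have hs'0 : 0 ≤ s' := div_nonneg hc hθ'δ.le
    have h2 : (1/θ' - 1) * s' = (1/θ - 1) * s - (1/θ - 1/θ') * D - η/3 := by
      rw [hs'def]; field_simp <;> ring <;> ring
    have hmem := mem_LSet_up μ hD hqA hθ hθ' hlt hs hs'0 (by positivity : (0:ℝ) < η/3) h2.le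
    have hle : s' ≤ lowerEq μ θ' := le_csSup hbddθ' hmem
    have h1 : (1/θ' - 1) * s' ≤ (1/θ' - 1) * lowerEq μ θ' :=
      mul_le_mul_of_nonneg_left hle hθ'δ.le
    have h3 : (1/θ - 1) * lowerEq μ θ ≤ (1/θ - 1) * (s + (η/3) / (1/θ - 1)) :=
      mul_le_mul_of_nonneg_left hBle.le hθδ.le
    have h4 : (1/θ - 1) * (s + (η/3) / (1/θ - 1)) = (1/θ - 1) * s + η/3 := by
      rw [mul_add, hmul]
    have h5 : D * (1/θ - 1/θ') = (1/θ - 1/θ') * D := mul_comm _ _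
    linarith [h1, h2.le, h3, h4.le]
  · have h3 : (1/θ - 1) * lowerEq μ θ ≤ (1/θ - 1) * (s + (η/3) / (1/θ - 1)) :=
      mul_le_mul_of_nonneg_left hBle.le hθδ.le
    have h4 : (1/θ - 1) * (s + (η/3) / (1/θ - 1)) = (1/θ - 1) * s + η/3 := by
      rw [mul_add, hmul]
    have h6 : 0 ≤ (1/θ' - 1) * lowerEq μ θ' := mul_nonneg hθ'δ.le hB'0
    have h5 : D * (1/θ - 1/θ') = (1/θ - 1/θ') * D := mul_comm _ _
    linarith [h3, h4.le, h6]

/-- Continuity on `(0,1)` from the Lipschitz property of `θ ↦ (1/θ-1) f(θ)`. -/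
lemma contOn_of_psi {f : ℝ → ℝ} {D : ℝ} (hD : 0 ≤ D)
    (h : ∀ θ θ' : ℝ, θ ∈ Set.Ioo (0:ℝ) 1 → θ' ∈ Set.Ioo (0:ℝ) 1 → θ < θ' →
      (1/θ' - 1) * f θ' ≤ (1/θ - 1) * f θ ∧
      (1/θ - 1) * f θ ≤ (1/θ' - 1) * f θ' + D * (1/θ - 1/θ')) :
    ContinuousOn f (Set.Ioo 0 1) := by
  set ψ : ℝ → ℝ := fun θ => (1/θ - 1) * f θ with hψ
  have hlip : ∀ a ∈ Set.Ioo (0:ℝ) 1, ∀ b ∈ Set.Ioo (0:ℝ) 1,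
      |ψ a - ψ b| ≤ D * |1/a - 1/b| := by
    intro a ha b hb
    rcases lt_trichotomy a b with hab | hab | hab
    · obtain ⟨h1, h2⟩ := h a b ha hb hab
      have hdd : 0 < 1/a - 1/b := one_div_sub_pos ha.1 hab
      rw [abs_of_nonneg (by simp only [hψ]; linarith : (0:ℝ) ≤ ψ a - ψ b),
        abs_of_pos hdd]
      simp only [hψ]
      linarith
    · rw [hab]
      simp only [sub_self, abs_zero]
      positivity
    · obtain ⟨h1, h2⟩ := h b a hb ha hab
      have hdd : 0 < 1/b - 1/a := one_div_sub_pos hb.1 hab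
      rw [abs_sub_comm, abs_of_nonneg (by simp only [hψ]; linarith : (0:ℝ) ≤ ψ b - ψ a),
        abs_sub_comm, abs_of_pos hdd]
      simp only [hψ]
      linarith
  have hcψ : ContinuousOn ψ (Set.Ioo 0 1) := by
    intro x hx
    rw [Metric.continuousWithinAt_iff]
    intro ε hε
    have hinv : ContinuousAt (fun t : ℝ => 1/t) x :=
      ContinuousAt.div continuousAt_const continuousAt_id (ne_of_gt hx.1)
    rw [Metric.continuousAt_iff] at hinv
    obtain ⟨δ, hδ, hinv'⟩ := hinv (ε/(D+1)) (by positivity)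
    refine ⟨δ, hδ, ?_⟩
    intro y hy hyd
    have h1 := hinv' hyd
    have h2 := hlip y hy x hx
    rw [Real.dist_eq] at h1 ⊢
    calc |ψ y - ψ x| ≤ D * |1/y - 1/x| := h2
      _ ≤ D * (ε/(D+1)) := mul_le_mul_of_nonneg_left h1.le hD
      _ < ε := by
          rw [mul_div_assoc', div_lt_iff₀ (by positivity : (0:ℝ) < D+1)]
          nlinarith
  have heq : Set.EqOn f (fun θ => θ/(1-θ) * ψ θ) (Set.Ioo 0 1) := by
    intro x hx
    have hx0 : (0:ℝ) < x := hx.1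
    have hx1 : x < 1 := hx.2
    have hz1 : x ≠ 0 := hx0.ne'
    have hz2 : (1 - x) ≠ 0 := by intro hcon; rw [sub_eq_zero] at hcon; exact absurd hcon.symm hx1.ne
    have hid : x/(1-x) * ((1/x - 1) * f x) = f x := by
      field_simp
    simp only [hψ]
    exact hid.symm
  have hgcont : ContinuousOn (fun θ : ℝ => θ/(1-θ) * ψ θ) (Set.Ioo 0 1) := by
    apply ContinuousOn.mul _ hcψ
    apply ContinuousOn.div continuousOn_id (continuous_const.sub continuous_id).continuousOn
    intro x hx
    intro hcon
    rw [Pi.sub_apply, sub_eq_zero] at hcon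
    exact absurd hcon.symm hx.2.ne
  exact hgcont.congr heq

lemma term_bound {D dd ε θ : ℝ} (hD : 0 ≤ D) (hdd : 0 < dd) (hε : 0 < ε)
    (c : ℝ) (hc : 0 < c) (h1θ : 0 < 1 - θ)
    (h1θ' : 1 - θ < ε * dd / (c * (D+1) * (1+dd))) (hc13 : 6 ≤ c) :
    3 * (1-θ) * D * ((1 + dd)/dd) < ε/2 := by
  have hT : (0:ℝ) ≤ 3 * D * ((1+dd)/dd) := by positivity
  have e1 : 3 * (1-θ) * D * ((1 + dd)/dd) = (1-θ) * (3 * D * ((1+dd)/dd)) := by ring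
  rw [e1]
  have h2 : (1-θ) * (3 * D * ((1+dd)/dd))
      ≤ (ε * dd / (c * (D+1) * (1+dd))) * (3 * D * ((1+dd)/dd)) :=
    mul_le_mul_of_nonneg_right h1θ'.le hT
  have e2 : (ε * dd / (c * (D+1) * (1+dd))) * (3 * D * ((1+dd)/dd))
      = 3 * ε * D / (c * (D+1)) := by
    field_simp
  have h3 : 3 * ε * D / (c * (D+1)) < ε/2 := by
    rw [div_lt_iff₀ (by positivity : (0:ℝ) < c * (D+1))]
    nlinarith [mul_nonneg hε.le hD, mul_le_mul_of_nonneg_left hc13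
      (mul_nonneg (mul_nonneg hε.le hD) (by norm_num : (0:ℝ) ≤ 1/6))]
  calc (1-θ) * (3 * D * ((1+dd)/dd))
      ≤ (ε * dd / (c * (D+1) * (1+dd))) * (3 * D * ((1+dd)/dd)) := h2
    _ = 3 * ε * D / (c * (D+1)) := e2
    _ < ε/2 := h3

lemma tendsto_upperEq {D : ℝ} (hD : 0 ≤ D)
    (hqA : ∀ δ : ℝ, 0 < δ → ∃ s ∈ upperHSet μ δ, s ≤ D) :
    Tendsto (fun θ => upperEq μ θ) (nhdsWithin 1 (Set.Ioo 0 1)) (nhds (dimqA μ)) := by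
  haveI : Nonempty {δ : ℝ // 0 < δ} := ⟨⟨1, one_pos⟩⟩
  have hbddA : BddAbove (Set.range fun δ : {δ : ℝ // 0 < δ} => sInf (upperHSet μ δ.1)) := by
    refine ⟨D, ?_⟩
    rintro _ ⟨δ, rfl⟩
    obtain ⟨s, hmem, hle⟩ := hqA δ.1 δ.2
    exact le_trans (csInf_le (bddBelow_upperHSet μ δ.1) hmem) hle
  have hAle : ∀ θ ∈ Set.Ioo (0:ℝ) 1, upperEq μ θ ≤ dimqA μ := by
    intro θ hθ
    have hθδ := (theta_facts hθ).2.2.2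
    obtain ⟨s, hmem, hle⟩ := hqA (1/θ-1) hθδ
    refine le_trans (upperEq_le_qA μ hθ ⟨s, hmem⟩) ?_
    exact le_ciSup hbddA ⟨1/θ-1, hθδ⟩
  rw [Metric.tendsto_nhdsWithin_nhds]
  intro ε hε
  have hlt : dimqA μ - ε/2 < dimqA μ := by linarith
  obtain ⟨δ, hδlt⟩ := exists_lt_of_lt_ciSup hlt
  have hδ1 : 0 < δ.1 := δ.2
  set η : ℝ := min (1/4 : ℝ) (ε * δ.1 / (13 * (D+1) * (1+δ.1))) with hηdef
  refine ⟨η, lt_min (by norm_num) (by positivity), ?_⟩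
  intro θ hθ hdist
  rw [Real.dist_eq] at hdist ⊢
  have hθ1 : θ < 1 := hθ.2
  have h1θ : 1 - θ < η := by
    rw [abs_sub_comm, abs_of_pos (by linarith : (0:ℝ) < 1 - θ)] at hdist
    exact hdist
  have hθhalf : 1/2 ≤ θ := by
    have := min_le_left (1/4 : ℝ) (ε * δ.1 / (13 * (D+1) * (1+δ.1)))
    rw [hηdef] at h1θ
    linarith [lt_of_lt_of_le h1θ this]
  obtain ⟨s₀, hmem₀, _⟩ := hqA (1/θ-1) (theta_facts hθ).2.2.2
  have hEne : (ESet μ θ).Nonempty := ⟨s₀, mem_ESet_of_mem_upperHSet μ hθ hmem₀⟩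
  have hkey := qA_le_upperEq_add μ hD hqA hθ hθhalf hδ1 hEne
  have hterm : 3 * (1-θ) * D * ((1 + δ.1)/δ.1) < ε/2 := by
    apply term_bound hD hδ1 hε 13 (by norm_num) (by linarith)
    · exact lt_of_lt_of_le h1θ (min_le_right _ _)
    · norm_num
  have hup := hAle θ hθ
  have hlow : dimqA μ - ε < upperEq μ θ := by
    have := hδlt
    linarith [hkey, hterm]
  rw [abs_sub_comm, abs_of_nonneg (by linarith : (0:ℝ) ≤ dimqA μ - upperEq μ θ)]
  linarith

lemma tendsto_lowerEq {D : ℝ} (hD : 0 ≤ D)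
    (hqA : ∀ δ : ℝ, 0 < δ → ∃ s ∈ upperHSet μ δ, s ≤ D) (hne : (msupp μ).Nonempty) :
    Tendsto (fun θ => lowerEq μ θ) (nhdsWithin 1 (Set.Ioo 0 1)) (nhds (dimqL μ)) := by
  haveI : Nonempty {δ : ℝ // 0 < δ} := ⟨⟨1, one_pos⟩⟩
  have hHbdd : ∀ δ : ℝ, 0 < δ → BddAbove (lowerHSet μ δ) := by
    intro δ hδ
    obtain ⟨s, hmem, hle⟩ := hqA δ hδ
    exact ⟨s, fun b hb => lowerHSet_le_upperHSet μ hδ hne hb hmem⟩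
  have hH0 : ∀ δ : ℝ, 0 < δ → (0:ℝ) ≤ sSup (lowerHSet μ δ) := by
    intro δ hδ
    exact le_csSup (hHbdd δ hδ) (zero_mem_lowerHSet μ hδ)
  have hbddL : BddBelow (Set.range fun δ : {δ : ℝ // 0 < δ} => sSup (lowerHSet μ δ.1)) := by
    refine ⟨0, ?_⟩
    rintro _ ⟨δ, rfl⟩
    exact hH0 δ.1 δ.2
  have hLbdd : ∀ θ : ℝ, θ ∈ Set.Ioo (0:ℝ) 1 → BddAbove (LSet μ θ) := by
    intro θ hθ
    obtain ⟨s, hmem, hle⟩ := hqA (1/θ-1) (theta_facts hθ).2.2.2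
    exact ⟨_, fun b hb => LSet_le_ESet μ hθ hne hb (mem_ESet_of_mem_upperHSet μ hθ hmem)⟩
  have hLD : ∀ θ : ℝ, θ ∈ Set.Ioo (0:ℝ) 1 → ∀ s ∈ LSet μ θ, s ≤ D := by
    intro θ hθ s hs
    obtain ⟨su, hmem, hle⟩ := hqA (1/θ-1) (theta_facts hθ).2.2.2
    exact le_trans (LSet_le_ESet μ hθ hne hs (mem_ESet_of_mem_upperHSet μ hθ hmem)) hle
  have hBge : ∀ θ ∈ Set.Ioo (0:ℝ) 1, dimqL μ ≤ lowerEq μ θ := by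
    intro θ hθ
    have hθδ := (theta_facts hθ).2.2.2
    refine le_trans (ciInf_le hbddL ⟨1/θ-1, hθδ⟩) ?_
    exact qL_le_lowerEq μ hθ (hLbdd θ hθ)
  rw [Metric.tendsto_nhdsWithin_nhds]
  intro ε hε
  have hlt : dimqL μ < dimqL μ + ε/2 := by linarith
  obtain ⟨δ, hδlt⟩ := exists_lt_of_ciInf_lt hlt
  have hδ1 : 0 < δ.1 := δ.2
  set η : ℝ := min (1/4 : ℝ) (ε * δ.1 / (13 * (D+1) * (1+δ.1))) with hηdef
  refine ⟨η, lt_min (by norm_num) (by positivity), ?_⟩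
  intro θ hθ hdist
  rw [Real.dist_eq] at hdist ⊢
  have hθ1 : θ < 1 := hθ.2
  have h1θ : 1 - θ < η := by
    rw [abs_sub_comm, abs_of_pos (by linarith : (0:ℝ) < 1 - θ)] at hdist
    exact hdist
  have hθhalf : 1/2 ≤ θ := by
    have := min_le_left (1/4 : ℝ) (ε * δ.1 / (13 * (D+1) * (1+δ.1)))
    rw [hηdef] at h1θ
    linarith [lt_of_lt_of_le h1θ this]
  have hθ0 : 0 < θ := hθ.1
  have hkey := lowerEq_le_qL_add μ hD hθ hδ1 (hLbdd θ hθ) (hLD θ hθ)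
    (hHbdd δ.1 hδ1) (hH0 δ.1 hδ1)
  have h2θ : 1/θ - 1 ≤ 2 * (1 - θ) := by
    rw [div_sub' hθ0.ne', div_le_iff₀ hθ0]
    nlinarith
  have hterm0 : (1/θ - 1) * D * ((1 + δ.1)/δ.1) ≤ 3 * (1-θ) * D * ((1 + δ.1)/δ.1) := by
    apply mul_le_mul_of_nonneg_right _ (by positivity)
    apply mul_le_mul_of_nonneg_right _ hD
    linarith
  have hterm : 3 * (1-θ) * D * ((1 + δ.1)/δ.1) < ε/2 := by
    apply term_bound hD hδ1 hε 13 (by norm_num) (by linarith)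
    · exact lt_of_lt_of_le h1θ (min_le_right _ _)
    · norm_num
  have hge := hBge θ hθ
  have hupp : lowerEq μ θ < dimqL μ + ε := by
    linarith [hkey, hδlt]
  rw [abs_of_nonneg (by linarith : (0:ℝ) ≤ lowerEq μ θ - dimqL μ)]
  linarith

end Main

theorem assouad_spectrum_continuous_and_limits
    {X : Type*} [MetricSpace X] [MeasurableSpace X] [BorelSpace X]
    (μ : Measure X) [IsProbabilityMeasure μ] (hcpt : IsCompact (msupp μ))
    (hqA : ∃ D : ℝ, ∀ δ : ℝ, 0 < δ → ∃ s ∈ upperHSet μ δ, s ≤ D) :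
    ContinuousOn (fun θ => lowerEq μ θ) (Set.Ioo 0 1) ∧
    ContinuousOn (fun θ => upperEq μ θ) (Set.Ioo 0 1) ∧
    Tendsto (fun θ => lowerEq μ θ) (nhdsWithin 1 (Set.Ioo 0 1)) (nhds (dimqL μ)) ∧
    Tendsto (fun θ => upperEq μ θ) (nhdsWithin 1 (Set.Ioo 0 1)) (nhds (dimqA μ)) := by
  obtain ⟨D, hqA₀⟩ := hqA
  obtain ⟨s₁, hs₁mem, hs₁le⟩ := hqA₀ 1 one_pos
  have hD0 : 0 ≤ D := le_trans hs₁mem.1 hs₁le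
  haveI : Nonempty {δ : ℝ // 0 < δ} := ⟨⟨1, one_pos⟩⟩
  by_cases hsupp : msupp μ = ∅
  · -- empty support : everything is identically zero
    have hA : (fun θ => upperEq μ θ) = fun _ => (0:ℝ) := by
      funext θ
      rw [upperEq_def, ESet_empty_supp μ hsupp, sInf_nonneg_set]
    have hB : (fun θ => lowerEq μ θ) = fun _ => (0:ℝ) := by
      funext θ
      rw [lowerEq_def, LSet_empty_supp μ hsupp, sSup_nonneg_set]
    have hqA0 : dimqA μ = 0 := by
      rw [dimqA]
      have : (fun δ : {δ : ℝ // 0 < δ} => sInf (upperHSet μ δ.1)) = fun _ => (0:ℝ) := by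
        funext δ
        rw [upperHSet_empty_supp μ hsupp, sInf_nonneg_set]
      rw [this]
      exact ciSup_const
    have hqL0 : dimqL μ = 0 := by
      rw [dimqL]
      have : (fun δ : {δ : ℝ // 0 < δ} => sSup (lowerHSet μ δ.1)) = fun _ => (0:ℝ) := by
        funext δ
        rw [lowerHSet_empty_supp μ hsupp, sSup_nonneg_set]
      rw [this]
      exact ciInf_const
    refine ⟨?_, ?_, ?_, ?_⟩
    · rw [hB]; exact continuousOn_const
    · rw [hA]; exact continuousOn_const
    · rw [hB, hqL0]; exact tendsto_const_nhds
    · rw [hA, hqA0]; exact tendsto_const_nhds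
  · have hne : (msupp μ).Nonempty := Set.nonempty_iff_ne_empty.2 hsupp
    refine ⟨?_, ?_, ?_, ?_⟩
    · apply contOn_of_psi hD0
      intro θ θ' hθ hθ' hlt
      exact ⟨psiB_anti μ hD0 hqA₀ hne hθ hθ' hlt, psiB_lip μ hD0 hqA₀ hne hθ hθ' hlt⟩
    · apply contOn_of_psi hD0
      intro θ θ' hθ hθ' hlt
      exact ⟨psiA_anti μ hD0 hqA₀ hθ hθ' hlt, psiA_lip μ hD0 hqA₀ hθ hθ' hlt⟩
    · exact tendsto_lowerEq μ hD0 hqA₀ hne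
    · exact tendsto_upperEq μ hD0 hqA₀
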